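/- For each k ∈ ℤ, the cluster pre-variable x_k, regarded as a Laurent polynomial in x₁, x₂ over k[p_{1,1},…,p_{1,ℓ₁}, p_{1,ℓ₁}^{-1}, p_{2,1},…,p_{2,ℓ₂}, p_{2,ℓ₂}^{-1}], has a unique term of minimal total degree in x₁, x₂, and there exist integers a_k, b_k such that the element X_k = p_{1,ℓ₁}^{a_k}·p_{2,ℓ₂}^{b_k}·x_k has this unique minimal total-degree term with coefficient 1. (This makes the generalized cluster variables X_k well defined.) -/

import Mathlib

attribute [local instance] Classical.propDecidable
set_option maxHeartbeats 1000000
set_option synthInstance.maxHeartbeats 200000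
set_option linter.unusedVariables false
set_option linter.unusedTactic false

noncomputable section

namespace GCA

/-- The variables: `Sum.inl (i, j)` is the coefficient indeterminate `p_{i+1,j}` (only those
with `1 ≤ j ≤ ℓ_{i+1}` are used), and `Sum.inr i` is the cluster variable `x_{i+1}`. -/
abbrev Vars := (Fin 2 × ℕ) ⊕ Fin 2

/-- The ambient rational function field `k(p_{1,1},…,p_{2,ℓ₂})(x₁,x₂)`. -/
abbrev FF (K : Type) [Field K] := FractionRing (MvPolynomial Vars K)

variable (K : Type) [Field K]

/-- The image in `FF K` of a polynomial variable. -/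
def ev (v : Vars) : FF K := algebraMap (MvPolynomial Vars K) (FF K) (MvPolynomial.X v)

/-- The coefficient indeterminate `p_{i+1,j}` (for `i : Fin 2`, `j ≥ 1`). -/
def p (i : Fin 2) (j : ℕ) : FF K := ev K (.inl (i, j))

/-- The initial cluster variable `x₁`. -/
def x1 : FF K := ev K (.inr 0)

/-- The initial cluster variable `x₂`. -/
def x2 : FF K := ev K (.inr 1)

/-- The image of the ground field `k` in `FF K`. -/
def KImage : Set (FF K) :=
  Set.range fun c : K => algebraMap (MvPolynomial Vars K) (FF K) (MvPolynomial.C c)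

/-- The set of coefficient indeterminates `p_{1,1},…,p_{1,ℓ₁},p_{2,1},…,p_{2,ℓ₂}`. -/
def pGens (ℓ₁ ℓ₂ : ℕ) : Set (FF K) :=
  (fun j => p K 0 j) '' Set.Icc 1 ℓ₁ ∪ (fun j => p K 1 j) '' Set.Icc 1 ℓ₂

variable (ℓ₁ ℓ₂ : ℕ)

/-- The exchange polynomial `P₁(z) = 1 + p_{1,1}z + ⋯ + p_{1,ℓ₁}z^{ℓ₁}`. -/
def P1 (z : FF K) : FF K := 1 + ∑ j ∈ Finset.Icc 1 ℓ₁, p K 0 j * z ^ j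

/-- The exchange polynomial `P₂(z) = 1 + p_{2,1}z + ⋯ + p_{2,ℓ₂}z^{ℓ₂}`. -/
def P2 (z : FF K) : FF K := 1 + ∑ j ∈ Finset.Icc 1 ℓ₂, p K 1 j * z ^ j

/-- `P̄₁(z) = p_{1,ℓ₁}^{-1}·z^{ℓ₁}·P₁(z^{-1})`. -/
def P1bar (z : FF K) : FF K := (p K 0 ℓ₁)⁻¹ * z ^ ℓ₁ * P1 K ℓ₁ z⁻¹

/-- `P̄₂(z) = p_{2,ℓ₂}^{-1}·z^{ℓ₂}·P₂(z^{-1})`. -/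
def P2bar (z : FF K) : FF K := (p K 1 ℓ₂)⁻¹ * z ^ ℓ₂ * P2 K ℓ₂ z⁻¹

/-- `x : ℤ → FF K` is the family of cluster pre-variables: `x 1 = x₁`, `x 2 = x₂`, and
`x_{k+1}·x_{k−1} = P₁(x_k), P₂(x_k), P̄₁(x_k), P̄₂(x_k)` according as
`k ≡ 1, 2, 3, 0 (mod 4)`. -/
def IsPreVarSeq (x : ℤ → FF K) : Prop :=
  x 1 = x1 K ∧ x 2 = x2 K ∧ ∀ k : ℤ,
    x (k + 1) * x (k - 1) =
      if k % 4 = 1 then P1 K ℓ₁ (x k)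
      else if k % 4 = 2 then P2 K ℓ₂ (x k)
      else if k % 4 = 3 then P1bar K ℓ₁ (x k)
      else P2bar K ℓ₂ (x k)

/-- The coefficient ring `k[p_{1,1},…,p_{1,ℓ₁},p_{1,ℓ₁}^{-1},p_{2,1},…,p_{2,ℓ₂},p_{2,ℓ₂}^{-1}]`,
as a subring of `FF K`. -/
def CoeffRing : Subring (FF K) :=
  Subring.closure (KImage K ∪ pGens K ℓ₁ ℓ₂ ∪ {(p K 0 ℓ₁)⁻¹, (p K 1 ℓ₂)⁻¹})

/-- The Laurent polynomial ring
`k[p_{1,1},…,p_{1,ℓ₁},p_{1,ℓ₁}^{-1},p_{2,1},…,p_{2,ℓ₂},p_{2,ℓ₂}^{-1}][x₁^{±1},x₂^{±1}]`,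
as a subring of `FF K`. -/
def LaurentRing : Subring (FF K) :=
  Subring.closure (KImage K ∪ pGens K ℓ₁ ℓ₂ ∪
    {(p K 0 ℓ₁)⁻¹, (p K 1 ℓ₂)⁻¹, x1 K, (x1 K)⁻¹, x2 K, (x2 K)⁻¹})

/-! ### Part 0 : basic setup -/

section Basic
open MvPolynomial

/-- the canonical map -/
def phi : MvPolynomial Vars K →+* FF K := (algebraMap (MvPolynomial Vars K) (FF K) : _ →+* _)

lemma phi_inj : Function.Injective (phi K) := IsFractionRing.injective _ _

lemma phi_add (a b : MvPolynomial Vars K) : phi K (a + b) = phi K a + phi K b := map_add _ _ _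
lemma phi_mul (a b : MvPolynomial Vars K) : phi K (a * b) = phi K a * phi K b := map_mul _ _ _
lemma phi_neg (a : MvPolynomial Vars K) : phi K (-a) = -phi K a := map_neg _ _
lemma phi_one : phi K 1 = 1 := map_one _
lemma phi_zero : phi K 0 = 0 := map_zero _
lemma phi_pow (a : MvPolynomial Vars K) (n : ℕ) : phi K (a ^ n) = phi K a ^ n := map_pow _ _ _

lemma phi_ne_zero {q : MvPolynomial Vars K} (h : q ≠ 0) : phi K q ≠ 0 := by
  intro h0
  exact h (phi_inj K (by rw [h0, phi_zero]))

lemma ev_ne_zero (v : Vars) : ev K v ≠ 0 := phi_ne_zero K (MvPolynomial.X_ne_zero v)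

lemma p_ne_zero (i : Fin 2) (j : ℕ) : p K i j ≠ 0 := ev_ne_zero K _
lemma x1_ne_zero : x1 K ≠ 0 := ev_ne_zero K _
lemma x2_ne_zero : x2 K ≠ 0 := ev_ne_zero K _

/-- inclusion of the p-only polynomials -/
def rin (q : MvPolynomial (Fin 2 × ℕ) K) : MvPolynomial Vars K := MvPolynomial.rename Sum.inl q

lemma rin_inj : Function.Injective (rin K) :=
  MvPolynomial.rename_injective _ Sum.inl_injective

lemma rin_mul (a b : MvPolynomial (Fin 2 × ℕ) K) : rin K (a * b) = rin K a * rin K b := by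
  simp [rin]

lemma rin_add (a b : MvPolynomial (Fin 2 × ℕ) K) : rin K (a + b) = rin K a + rin K b := by
  simp [rin]

lemma rin_neg (a : MvPolynomial (Fin 2 × ℕ) K) : rin K (-a) = -rin K a := by
  simp [rin]

lemma rin_zero : rin K 0 = 0 := by simp [rin]
lemma rin_one : rin K 1 = 1 := by simp [rin]

lemma prin_ne_zero {s : MvPolynomial (Fin 2 × ℕ) K} (hs : s ≠ 0) : phi K (rin K s) ≠ 0 :=
  phi_ne_zero K (fun h => hs (rin_inj K (by rw [h, rin_zero])))

end Basic

/-! ### Part 1 : linear independence of Laurent monomials over the coefficient field -/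

section Indep
open MvPolynomial

/-- the subfield of x-free elements -/
def CoeffField : Subfield (FF K) := Subfield.closure (KImage K ∪ pGens K ℓ₁ ℓ₂)

lemma coeffRing_le_coeffField (hℓ₁ : 1 ≤ ℓ₁) (hℓ₂ : 1 ≤ ℓ₂) :
    (CoeffRing K ℓ₁ ℓ₂ : Set (FF K)) ⊆ (CoeffField K ℓ₁ ℓ₂ : Set (FF K)) := by
  intro c hc
  have h1 : p K 0 ℓ₁ ∈ CoeffField K ℓ₁ ℓ₂ :=
    Subfield.subset_closure (Or.inr (Or.inl ⟨ℓ₁, ⟨hℓ₁, le_refl _⟩, rfl⟩))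
  have h2 : p K 1 ℓ₂ ∈ CoeffField K ℓ₁ ℓ₂ :=
    Subfield.subset_closure (Or.inr (Or.inr ⟨ℓ₂, ⟨hℓ₂, le_refl _⟩, rfl⟩))
  have : CoeffRing K ℓ₁ ℓ₂ ≤ (CoeffField K ℓ₁ ℓ₂).toSubring := by
    apply Subring.closure_le.2
    rintro z (hz | hz)
    · exact Subfield.subset_closure hz
    · rcases hz with rfl | hz
      · exact Subfield.inv_mem _ h1
      · rw [Set.mem_singleton_iff] at hz; subst hz
        exact Subfield.inv_mem _ h2
  exact this hc

/-- every element of the coefficient field is a quotient of x-free polynomials -/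
lemma coeffField_frac {c : FF K} (hc : c ∈ CoeffField K ℓ₁ ℓ₂) :
    ∃ q s : MvPolynomial (Fin 2 × ℕ) K, s ≠ 0 ∧
      c * phi K (rin K s) = phi K (rin K q) := by
  induction hc using Subfield.closure_induction with
  | mem z hz =>
    rcases hz with ⟨k, rfl⟩ | hz
    · refine ⟨C k, 1, one_ne_zero, ?_⟩
      rw [rin_one, phi_one, mul_one]
      simp [phi, rin, MvPolynomial.rename_C]
    · rcases hz with ⟨j, _, rfl⟩ | ⟨j, _, rfl⟩
      · refine ⟨X (0, j), 1, one_ne_zero, ?_⟩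
        rw [rin_one, phi_one, mul_one]
        simp [phi, rin, p, ev, MvPolynomial.rename_X]
      · refine ⟨X (1, j), 1, one_ne_zero, ?_⟩
        rw [rin_one, phi_one, mul_one]
        simp [phi, rin, p, ev, MvPolynomial.rename_X]
  | one => exact ⟨1, 1, one_ne_zero, by rw [one_mul]⟩
  | add a b _ _ iha ihb =>
    obtain ⟨qa, sa, hsa, ha⟩ := iha
    obtain ⟨qb, sb, hsb, hb⟩ := ihb
    refine ⟨qa * sb + qb * sa, sa * sb, mul_ne_zero hsa hsb, ?_⟩
    rw [rin_add, rin_mul, rin_mul, rin_mul, phi_add, phi_mul, phi_mul, phi_mul]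
    calc (a + b) * (phi K (rin K sa) * phi K (rin K sb))
        = (a * phi K (rin K sa)) * phi K (rin K sb)
          + (b * phi K (rin K sb)) * phi K (rin K sa) := by ring
      _ = _ := by rw [ha, hb]
  | neg a _ ih =>
    obtain ⟨q, s, hs, h⟩ := ih
    refine ⟨-q, s, hs, ?_⟩
    rw [rin_neg, phi_neg, ← h]
    ring
  | inv a _ ih =>
    obtain ⟨q, s, hs, h⟩ := ih
    by_cases ha : a = 0
    · refine ⟨0, 1, one_ne_zero, ?_⟩
      rw [ha, rin_zero, phi_zero]
      simp
    · have hq : q ≠ 0 := by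
        intro h0
        apply ha
        rw [h0, rin_zero, phi_zero] at h
        rcases mul_eq_zero.1 h with h' | h'
        · exact h'
        · exact absurd h' (prin_ne_zero K hs)
      refine ⟨s, q, hq, ?_⟩
      have hqne : phi K (rin K q) ≠ 0 := prin_ne_zero K hq
      have hane : a ≠ 0 := ha
      field_simp
      rw [← h]
  | mul a b _ _ iha ihb =>
    obtain ⟨qa, sa, hsa, ha⟩ := iha
    obtain ⟨qb, sb, hsb, hb⟩ := ihb
    refine ⟨qa * qb, sa * sb, mul_ne_zero hsa hsb, ?_⟩
    rw [rin_mul, rin_mul, phi_mul, phi_mul]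
    calc a * b * (phi K (rin K sa) * phi K (rin K sb))
        = (a * phi K (rin K sa)) * (b * phi K (rin K sb)) := by ring
      _ = _ := by rw [ha, hb]

/-- the composite map splitting off the x-variables -/
def theta : MvPolynomial Vars K →+* MvPolynomial (Fin 2) (MvPolynomial (Fin 2 × ℕ) K) :=
  (MvPolynomial.sumToIter K (Fin 2) (Fin 2 × ℕ)).comp
    ((MvPolynomial.rename (Equiv.sumComm (Fin 2 × ℕ) (Fin 2)) :
      MvPolynomial Vars K →ₐ[K] MvPolynomial (Fin 2 ⊕ (Fin 2 × ℕ)) K) : _ →+* _)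

lemma theta_rin (q : MvPolynomial (Fin 2 × ℕ) K) : theta K (rin K q) = C q := by
  induction q using MvPolynomial.induction_on with
  | C a =>
    simp [theta, rin, MvPolynomial.rename_C, MvPolynomial.sumToIter_C]
  | add f g hf hg =>
    rw [rin_add, map_add, hf, hg, map_add]
  | mul_X f v hf =>
    rw [rin_mul, map_mul, hf]
    have : rin K (X v) = X (Sum.inl v) := by simp [rin, MvPolynomial.rename_X]
    rw [map_mul, this]
    congr 1
    simp [theta, MvPolynomial.rename_X, MvPolynomial.sumToIter_Xr]

lemma theta_Xr (i : Fin 2) : theta K (X (Sum.inr i)) = X i := by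
  simp [theta, MvPolynomial.rename_X, MvPolynomial.sumToIter_Xl]

/-- Linear independence of Laurent monomials over the coefficient field. -/
lemma indep (D : Finset (ℤ × ℤ)) (c : ℤ × ℤ → FF K)
    (hc : ∀ d ∈ D, c d ∈ CoeffField K ℓ₁ ℓ₂)
    (h : ∑ d ∈ D, c d * x1 K ^ d.1 * x2 K ^ d.2 = 0) :
    ∀ d ∈ D, c d = 0 := by
  classical
  -- choose fraction representations
  have H : ∀ d : {d // d ∈ D}, ∃ qs : MvPolynomial (Fin 2 × ℕ) K × MvPolynomial (Fin 2 × ℕ) K,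
      qs.2 ≠ 0 ∧ c d.1 * phi K (rin K qs.2) = phi K (rin K qs.1) := by
    intro d
    obtain ⟨q, s, hs, hqs⟩ := coeffField_frac K ℓ₁ ℓ₂ (hc d.1 d.2)
    exact ⟨(q, s), hs, hqs⟩
  choose qs hs hqs using H
  set S : MvPolynomial (Fin 2 × ℕ) K := ∏ d ∈ D.attach, (qs d).2 with hSdef
  have hS : S ≠ 0 := Finset.prod_ne_zero_iff.2 (fun d _ => hs d)
  set Qd : {d // d ∈ D} → MvPolynomial (Fin 2 × ℕ) K :=
    fun d => (qs d).1 * ∏ e ∈ D.attach.erase d, (qs e).2 with hQdef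
  have key : ∀ d : {d // d ∈ D}, c d.1 * phi K (rin K S) = phi K (rin K (Qd d)) := by
    intro d
    have hsplit : S = (qs d).2 * ∏ e ∈ D.attach.erase d, (qs e).2 :=
      (Finset.mul_prod_erase _ _ (Finset.mem_attach _ d)).symm
    rw [hQdef]
    rw [hsplit, rin_mul, phi_mul, rin_mul, phi_mul, ← mul_assoc, hqs d]
  -- the natural shift
  set N : ℕ := D.sup (fun d => max (-d.1).toNat (-d.2).toNat) with hNdef
  have hN : ∀ d ∈ D, 0 ≤ d.1 + (N : ℤ) ∧ 0 ≤ d.2 + (N : ℤ) := by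
    intro d hd
    have h1 : max (-d.1).toNat (-d.2).toNat ≤ N :=
      Finset.le_sup (f := fun d : ℤ × ℤ => max (-d.1).toNat (-d.2).toNat) hd
    have h2 : (-d.1).toNat ≤ N := le_trans (le_max_left _ _) h1
    have h3 : (-d.2).toNat ≤ N := le_trans (le_max_right _ _) h1
    omega
  set nn : {d // d ∈ D} → ℕ := fun d => (d.1.1 + (N : ℤ)).toNat with hnn
  set mm : {d // d ∈ D} → ℕ := fun d => (d.1.2 + (N : ℤ)).toNat with hmm
  -- the big polynomial identity
  have hx1 : x1 K = phi K (X (Sum.inr 0)) := rfl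
  have hx2 : x2 K = phi K (X (Sum.inr 1)) := rfl
  have term_eq : ∀ d : {d // d ∈ D},
      c d.1 * x1 K ^ d.1.1 * x2 K ^ d.1.2 * (phi K (rin K S) * x1 K ^ (N : ℕ) * x2 K ^ (N : ℕ))
        = phi K (rin K (Qd d) * X (Sum.inr 0) ^ nn d * X (Sum.inr 1) ^ mm d) := by
    intro d
    rw [phi_mul, phi_mul, phi_pow, phi_pow, ← hx1, ← hx2, ← key d]
    have e1 : x1 K ^ d.1.1 * x1 K ^ (N : ℕ) = x1 K ^ (nn d) := by
      rw [← zpow_natCast (x1 K) N, ← zpow_add₀ (x1_ne_zero K), ← zpow_natCast (x1 K) (nn d),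
        hnn]
      congr 1
      exact (Int.toNat_of_nonneg (hN d.1 d.2).1).symm
    have e2 : x2 K ^ d.1.2 * x2 K ^ (N : ℕ) = x2 K ^ (mm d) := by
      rw [← zpow_natCast (x2 K) N, ← zpow_add₀ (x2_ne_zero K), ← zpow_natCast (x2 K) (mm d),
        hmm]
      congr 1
      exact (Int.toNat_of_nonneg (hN d.1 d.2).2).symm
    calc c d.1 * x1 K ^ d.1.1 * x2 K ^ d.1.2 * (phi K (rin K S) * x1 K ^ (N : ℕ) * x2 K ^ (N : ℕ))
        = (c d.1 * phi K (rin K S)) * (x1 K ^ d.1.1 * x1 K ^ (N : ℕ))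
            * (x2 K ^ d.1.2 * x2 K ^ (N : ℕ)) := by ring
      _ = _ := by rw [e1, e2]
  have hsum0 : (∑ d ∈ D.attach, c d.1 * x1 K ^ d.1.1 * x2 K ^ d.1.2)
      * (phi K (rin K S) * x1 K ^ (N : ℕ) * x2 K ^ (N : ℕ)) = 0 := by
    rw [← Finset.sum_attach D (fun d => c d * x1 K ^ d.1 * x2 K ^ d.2)] at h
    rw [h, zero_mul]
  rw [Finset.sum_mul] at hsum0
  have hsum1 : ∑ d ∈ D.attach, phi K (rin K (Qd d) * X (Sum.inr 0) ^ nn d * X (Sum.inr 1) ^ mm d) = 0 := by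
    rw [← hsum0]
    exact Finset.sum_congr rfl (fun d _ => (term_eq d).symm)
  have hpoly : ∑ d ∈ D.attach, rin K (Qd d) * X (Sum.inr 0) ^ nn d * X (Sum.inr 1) ^ mm d
      = (0 : MvPolynomial Vars K) := by
    apply phi_inj K
    rw [map_sum, phi_zero, hsum1]
  -- push through theta
  have htheta : ∑ d ∈ D.attach,
      (monomial (Finsupp.single (0 : Fin 2) (nn d) + Finsupp.single (1 : Fin 2) (mm d)) (Qd d) :
        MvPolynomial (Fin 2) (MvPolynomial (Fin 2 × ℕ) K)) = 0 := by
    have := congrArg (theta K) hpoly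
    rw [map_sum, map_zero] at this
    rw [← this]
    apply Finset.sum_congr rfl
    intro d _
    have tm : theta K (rin K (Qd d) * X (Sum.inr 0) ^ nn d * X (Sum.inr 1) ^ mm d)
        = C (Qd d) * X 0 ^ nn d * X 1 ^ mm d := by
      rw [map_mul, map_mul, map_pow, map_pow, theta_rin, theta_Xr, theta_Xr]
    rw [tm, X_pow_eq_monomial, X_pow_eq_monomial, C_mul_monomial, monomial_mul, mul_one,
      mul_one]
  -- extract coefficients
  intro d₀ hd₀
  have hQ0 : Qd ⟨d₀, hd₀⟩ = 0 := by
    have hco := congrArg (coeff (Finsupp.single (0 : Fin 2) (nn ⟨d₀, hd₀⟩)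
      + Finsupp.single (1 : Fin 2) (mm ⟨d₀, hd₀⟩))) htheta
    rw [coeff_zero, coeff_sum] at hco
    rw [Finset.sum_eq_single_of_mem ⟨d₀, hd₀⟩ (Finset.mem_attach _ _)] at hco
    · rwa [coeff_monomial, if_pos rfl] at hco
    · intro d _ hne
      rw [coeff_monomial, if_neg]
      intro hEq
      apply hne
      have h0 := congrArg (fun f => f (0 : Fin 2)) hEq
      have h1 := congrArg (fun f => f (1 : Fin 2)) hEq
      simp only [Finsupp.add_apply, Finsupp.single_apply] at h0 h1
      norm_num at h0 h1
      have hd := hN d.1 d.2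
      have hd0 := hN d₀ hd₀
      have e0 : d.1.1 = d₀.1 := by
        have a1 := Int.toNat_of_nonneg hd.1
        have a2 := Int.toNat_of_nonneg hd0.1
        simp only [hnn] at h0
        omega
      have e1 : d.1.2 = d₀.2 := by
        have a1 := Int.toNat_of_nonneg hd.2
        have a2 := Int.toNat_of_nonneg hd0.2
        simp only [hmm] at h1
        omega
      apply Subtype.ext
      exact Prod.ext e0 e1
  have := key ⟨d₀, hd₀⟩
  rw [hQ0, rin_zero, phi_zero] at this
  rcases mul_eq_zero.1 this with h' | h'
  · exact h'
  · exact absurd h' (prin_ne_zero K hS)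

end Indep

/-! ### Part 2 : representation calculus -/

section Reps
open Finset

/-- Laurent monomial -/
def mon (d : ℤ × ℤ) : FF K := x1 K ^ d.1 * x2 K ^ d.2

lemma mon_add (d e : ℤ × ℤ) : mon K (d + e) = mon K d * mon K e := by
  simp only [mon, Prod.fst_add, Prod.snd_add,
    zpow_add₀ (x1_ne_zero K), zpow_add₀ (x2_ne_zero K)]
  ring

lemma mon_ne_zero (d : ℤ × ℤ) : mon K d ≠ 0 :=
  mul_ne_zero (zpow_ne_zero _ (x1_ne_zero K)) (zpow_ne_zero _ (x2_ne_zero K))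

lemma mon_zero : mon K (0, 0) = 1 := by simp [mon]

variable (ℓ₁ ℓ₂ : ℕ)

/-- loose representation as a Laurent polynomial -/
def LRep (f : FF K) (D : Finset (ℤ × ℤ)) (c : ℤ × ℤ → FF K) : Prop :=
  (∀ d ∈ D, c d ∈ CoeffRing K ℓ₁ ℓ₂) ∧ f = ∑ d ∈ D, c d * mon K d

/-- full representation with a strictly minimal term at `e` whose coefficient is a
monomial in `p_{1,ℓ₁}^{±1}, p_{2,ℓ₂}^{±1}` -/
def Rep (f : FF K) (e : ℤ × ℤ) : Prop :=
  ∃ D c, LRep K ℓ₁ ℓ₂ f D c ∧ (∀ d ∈ D, c d ≠ 0) ∧ e ∈ D ∧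
    (∀ d ∈ D, d ≠ e → e.1 + e.2 < d.1 + d.2) ∧
    ∃ α β : ℤ, c e = p K 0 ℓ₁ ^ α * p K 1 ℓ₂ ^ β

/-- all terms of total degree above ν -/
def Above (f : FF K) (ν : ℤ) : Prop :=
  ∃ D c, LRep K ℓ₁ ℓ₂ f D c ∧ ∀ d ∈ D, ν < d.1 + d.2

variable {K ℓ₁ ℓ₂}

lemma coeff_unique (hℓ₁ : 1 ≤ ℓ₁) (hℓ₂ : 1 ≤ ℓ₂) {f : FF K} {D₁ D₂ : Finset (ℤ × ℤ)}
    {c₁ c₂ : ℤ × ℤ → FF K} (h₁ : LRep K ℓ₁ ℓ₂ f D₁ c₁) (h₂ : LRep K ℓ₁ ℓ₂ f D₂ c₂) :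
    ∀ d : ℤ × ℤ, (if d ∈ D₁ then c₁ d else 0) = (if d ∈ D₂ then c₂ d else 0) := by
  classical
  set g : ℤ × ℤ → FF K :=
    fun d => (if d ∈ D₁ then c₁ d else 0) - (if d ∈ D₂ then c₂ d else 0) with hg
  have e1 : ∑ d ∈ D₁ ∪ D₂, (if d ∈ D₁ then c₁ d else 0) * x1 K ^ d.1 * x2 K ^ d.2
      = ∑ d ∈ D₁, c₁ d * mon K d := by
    rw [← Finset.sum_subset Finset.subset_union_left
      (fun d _ hd => by rw [if_neg hd, zero_mul, zero_mul])]
    apply Finset.sum_congr rfl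
    intro d hd
    rw [if_pos hd, mon, mul_assoc]
  have e2 : ∑ d ∈ D₁ ∪ D₂, (if d ∈ D₂ then c₂ d else 0) * x1 K ^ d.1 * x2 K ^ d.2
      = ∑ d ∈ D₂, c₂ d * mon K d := by
    rw [← Finset.sum_subset Finset.subset_union_right
      (fun d _ hd => by rw [if_neg hd, zero_mul, zero_mul])]
    apply Finset.sum_congr rfl
    intro d hd
    rw [if_pos hd, mon, mul_assoc]
  have hsum : ∑ d ∈ D₁ ∪ D₂, g d * x1 K ^ d.1 * x2 K ^ d.2 = 0 := by
    have e3 : ∑ d ∈ D₁ ∪ D₂, g d * x1 K ^ d.1 * x2 K ^ d.2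
        = ∑ d ∈ D₁ ∪ D₂, (if d ∈ D₁ then c₁ d else 0) * x1 K ^ d.1 * x2 K ^ d.2
          - ∑ d ∈ D₁ ∪ D₂, (if d ∈ D₂ then c₂ d else 0) * x1 K ^ d.1 * x2 K ^ d.2 := by
      rw [← Finset.sum_sub_distrib]
      apply Finset.sum_congr rfl
      intro d _
      rw [hg]
      ring
    rw [e3, e1, e2, ← h₁.2, ← h₂.2, sub_self]
  have hmem : ∀ d ∈ D₁ ∪ D₂, g d ∈ CoeffField K ℓ₁ ℓ₂ := by
    intro d _
    apply Subfield.sub_mem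
    · by_cases hd : d ∈ D₁
      · rw [if_pos hd]; exact coeffRing_le_coeffField K ℓ₁ ℓ₂ hℓ₁ hℓ₂ (h₁.1 d hd)
      · rw [if_neg hd]; exact Subfield.zero_mem _
    · by_cases hd : d ∈ D₂
      · rw [if_pos hd]; exact coeffRing_le_coeffField K ℓ₁ ℓ₂ hℓ₁ hℓ₂ (h₂.1 d hd)
      · rw [if_neg hd]; exact Subfield.zero_mem _
  have hz := indep K ℓ₁ ℓ₂ (D₁ ∪ D₂) g hmem hsum
  intro d
  by_cases hd : d ∈ D₁ ∪ D₂
  · have h0 : g d = 0 := hz d hd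
    rw [hg] at h0
    exact sub_eq_zero.mp h0
  · rw [if_neg (fun h => hd (Finset.mem_union_left _ h)),
      if_neg (fun h => hd (Finset.mem_union_right _ h))]

lemma zpow_mem {R : Subring (FF K)} {x : FF K} (hx : x ∈ R) (hxi : x⁻¹ ∈ R) :
    ∀ n : ℤ, x ^ n ∈ R
  | (Int.ofNat n) => by
      rw [Int.ofNat_eq_natCast, zpow_natCast]; exact pow_mem hx n
  | (Int.negSucc n) => by
      rw [zpow_negSucc, ← inv_pow]; exact pow_mem hxi _

lemma p_mem {i : Fin 2} {j : ℕ} (h1 : 1 ≤ j) (h2 : (j ≤ ℓ₁ ∧ i = 0) ∨ (j ≤ ℓ₂ ∧ i = 1)) :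
    p K i j ∈ CoeffRing K ℓ₁ ℓ₂ := by
  apply Subring.subset_closure
  rcases h2 with ⟨h2, rfl⟩ | ⟨h2, rfl⟩
  · exact Or.inl (Or.inr (Or.inl ⟨j, ⟨h1, h2⟩, rfl⟩))
  · exact Or.inl (Or.inr (Or.inr ⟨j, ⟨h1, h2⟩, rfl⟩))

lemma p1l_inv_mem : (p K 0 ℓ₁)⁻¹ ∈ CoeffRing K ℓ₁ ℓ₂ :=
  Subring.subset_closure (Or.inr (Set.mem_insert _ _))

lemma p2l_inv_mem : (p K 1 ℓ₂)⁻¹ ∈ CoeffRing K ℓ₁ ℓ₂ :=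
  Subring.subset_closure (Or.inr (Set.mem_insert_of_mem _ rfl))

lemma ppow_mem (hℓ₁ : 1 ≤ ℓ₁) (hℓ₂ : 1 ≤ ℓ₂) (α β : ℤ) :
    p K 0 ℓ₁ ^ α * p K 1 ℓ₂ ^ β ∈ CoeffRing K ℓ₁ ℓ₂ :=
  mul_mem (zpow_mem (p_mem hℓ₁ (Or.inl ⟨le_rfl, rfl⟩)) p1l_inv_mem α)
    (zpow_mem (p_mem hℓ₂ (Or.inr ⟨le_rfl, rfl⟩)) p2l_inv_mem β)

lemma ppow_ne_zero (α β : ℤ) : p K 0 ℓ₁ ^ α * p K 1 ℓ₂ ^ β ≠ 0 :=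
  mul_ne_zero (zpow_ne_zero _ (p_ne_zero K 0 ℓ₁)) (zpow_ne_zero _ (p_ne_zero K 1 ℓ₂))

lemma coeffRing_le_laurent : CoeffRing K ℓ₁ ℓ₂ ≤ LaurentRing K ℓ₁ ℓ₂ := by
  apply Subring.closure_mono
  rintro z (hz | hz)
  · exact Or.inl hz
  · rcases hz with rfl | hz
    · exact Or.inr (Set.mem_insert _ _)
    · rw [Set.mem_singleton_iff] at hz; subst hz
      exact Or.inr (Set.mem_insert_of_mem _ (Set.mem_insert _ _))

lemma x1_mem_laurent : x1 K ∈ LaurentRing K ℓ₁ ℓ₂ := by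
  apply Subring.subset_closure
  exact Or.inr (by simp)

lemma x1_inv_mem_laurent : (x1 K)⁻¹ ∈ LaurentRing K ℓ₁ ℓ₂ := by
  apply Subring.subset_closure
  exact Or.inr (by simp)

lemma x2_mem_laurent : x2 K ∈ LaurentRing K ℓ₁ ℓ₂ := by
  apply Subring.subset_closure
  exact Or.inr (by simp)

lemma x2_inv_mem_laurent : (x2 K)⁻¹ ∈ LaurentRing K ℓ₁ ℓ₂ := by
  apply Subring.subset_closure
  exact Or.inr (by simp)

lemma mon_mem_laurent (d : ℤ × ℤ) : mon K d ∈ LaurentRing K ℓ₁ ℓ₂ :=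
  mul_mem (zpow_mem (x1_mem_laurent) (x1_inv_mem_laurent) d.1)
    (zpow_mem (x2_mem_laurent) (x2_inv_mem_laurent) d.2)

lemma LRep.mem_laurent {f : FF K} {D : Finset (ℤ × ℤ)} {c : ℤ × ℤ → FF K}
    (h : LRep K ℓ₁ ℓ₂ f D c) : f ∈ LaurentRing K ℓ₁ ℓ₂ := by
  rw [h.2]
  exact Subring.sum_mem _ (fun d hd =>
    mul_mem (coeffRing_le_laurent (h.1 d hd)) (mon_mem_laurent d))

lemma Rep.mem_laurent {f : FF K} {e : ℤ × ℤ} (h : Rep K ℓ₁ ℓ₂ f e) :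
    f ∈ LaurentRing K ℓ₁ ℓ₂ := by
  obtain ⟨D, c, hl, _, _, _, _⟩ := h
  exact hl.mem_laurent

lemma Rep.ne_zero (hℓ₁ : 1 ≤ ℓ₁) (hℓ₂ : 1 ≤ ℓ₂) {f : FF K} {e : ℤ × ℤ}
    (h : Rep K ℓ₁ ℓ₂ f e) : f ≠ 0 := by
  obtain ⟨D, c, hl, hnz, he, _, α, β, hcoef⟩ := h
  intro h0
  have h2 : LRep K ℓ₁ ℓ₂ f (∅ : Finset (ℤ × ℤ)) (fun _ => 0) := by
    constructor
    · intro d hd; exact absurd hd (Finset.notMem_empty d)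
    · rw [h0, Finset.sum_empty]
  have := coeff_unique hℓ₁ hℓ₂ hl h2 e
  rw [if_pos he, if_neg (Finset.notMem_empty e)] at this
  exact hnz e he this

/-- upgrade a loose representation to a full one by deleting zero coefficients -/
lemma rep_of_lrep {f : FF K} {D : Finset (ℤ × ℤ)} {c : ℤ × ℤ → FF K} {e : ℤ × ℤ}
    (hl : LRep K ℓ₁ ℓ₂ f D c) (he : e ∈ D)
    (hmin : ∀ d ∈ D, d ≠ e → e.1 + e.2 < d.1 + d.2)
    (hcoef : ∃ α β : ℤ, c e = p K 0 ℓ₁ ^ α * p K 1 ℓ₂ ^ β) :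
    Rep K ℓ₁ ℓ₂ f e := by
  classical
  obtain ⟨α, β, hc⟩ := hcoef
  refine ⟨D.filter (fun d => c d ≠ 0), c, ⟨fun d hd => hl.1 d (Finset.mem_filter.1 hd).1, ?_⟩,
    fun d hd => (Finset.mem_filter.1 hd).2, ?_, fun d hd => hmin d (Finset.mem_filter.1 hd).1, α, β, hc⟩
  · rw [hl.2]
    symm
    apply Finset.sum_filter_of_ne
    intro d _ hne
    intro h0
    apply hne
    rw [h0, zero_mul]
  · exact Finset.mem_filter.2 ⟨he, by rw [hc]; exact ppow_ne_zero α β⟩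

lemma rep_monomial (hℓ₁ : 1 ≤ ℓ₁) (hℓ₂ : 1 ≤ ℓ₂) (α β : ℤ) (d : ℤ × ℤ) :
    Rep K ℓ₁ ℓ₂ (p K 0 ℓ₁ ^ α * p K 1 ℓ₂ ^ β * mon K d) d := by
  apply rep_of_lrep (D := {d}) (c := fun _ => p K 0 ℓ₁ ^ α * p K 1 ℓ₂ ^ β)
  · constructor
    · intro d _; exact ppow_mem hℓ₁ hℓ₂ α β
    · rw [Finset.sum_singleton]
  · exact Finset.mem_singleton_self d
  · intro d' hd' hne
    rw [Finset.mem_singleton] at hd'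
    exact absurd hd' hne
  · exact ⟨α, β, rfl⟩

lemma lrep_mul {f g : FF K} {D₁ D₂ : Finset (ℤ × ℤ)} {c₁ c₂ : ℤ × ℤ → FF K}
    (h₁ : LRep K ℓ₁ ℓ₂ f D₁ c₁) (h₂ : LRep K ℓ₁ ℓ₂ g D₂ c₂) :
    LRep K ℓ₁ ℓ₂ (f * g) ((D₁ ×ˢ D₂).image (fun pr => pr.1 + pr.2))
      (fun d => ∑ pr ∈ (D₁ ×ˢ D₂).filter (fun pr => pr.1 + pr.2 = d), c₁ pr.1 * c₂ pr.2) := by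
  classical
  constructor
  · intro d _
    exact Subring.sum_mem _ (fun pr hpr =>
      mul_mem (h₁.1 pr.1 (Finset.mem_product.1 (Finset.mem_filter.1 hpr).1).1)
        (h₂.1 pr.2 (Finset.mem_product.1 (Finset.mem_filter.1 hpr).1).2))
  · rw [h₁.2, h₂.2, Finset.sum_mul_sum]
    have key : ∑ pr ∈ D₁ ×ˢ D₂, (c₁ pr.1 * mon K pr.1) * (c₂ pr.2 * mon K pr.2)
        = ∑ d ∈ (D₁ ×ˢ D₂).image (fun pr => pr.1 + pr.2),
            (∑ pr ∈ (D₁ ×ˢ D₂).filter (fun pr => pr.1 + pr.2 = d), c₁ pr.1 * c₂ pr.2) * mon K d := by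
      rw [← Finset.sum_fiberwise_of_maps_to (g := fun pr : (ℤ×ℤ) × (ℤ×ℤ) => pr.1 + pr.2)
        (fun pr hpr => Finset.mem_image_of_mem _ hpr)
        (fun pr => (c₁ pr.1 * mon K pr.1) * (c₂ pr.2 * mon K pr.2))]
      apply Finset.sum_congr rfl
      intro d _
      rw [Finset.sum_mul]
      apply Finset.sum_congr rfl
      intro pr hpr
      have : pr.1 + pr.2 = d := (Finset.mem_filter.1 hpr).2
      rw [← this, mon_add]
      ring
    rw [← key, Finset.sum_product]

lemma rep_mul (hℓ₁ : 1 ≤ ℓ₁) (hℓ₂ : 1 ≤ ℓ₂) {f g : FF K} {e₁ e₂ : ℤ × ℤ}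
    (h₁ : Rep K ℓ₁ ℓ₂ f e₁) (h₂ : Rep K ℓ₁ ℓ₂ g e₂) : Rep K ℓ₁ ℓ₂ (f * g) (e₁ + e₂) := by
  classical
  obtain ⟨D₁, c₁, hl₁, hnz₁, he₁, hm₁, α₁, β₁, hc₁⟩ := h₁
  obtain ⟨D₂, c₂, hl₂, hnz₂, he₂, hm₂, α₂, β₂, hc₂⟩ := h₂
  have hfib : (D₁ ×ˢ D₂).filter (fun pr => pr.1 + pr.2 = e₁ + e₂) = {(e₁, e₂)} := by
    apply Finset.eq_singleton_iff_unique_mem.2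
    constructor
    · exact Finset.mem_filter.2 ⟨Finset.mem_product.2 ⟨he₁, he₂⟩, rfl⟩
    · rintro ⟨a, b⟩ hab
      obtain ⟨hmem, heq⟩ := Finset.mem_filter.1 hab
      obtain ⟨ha, hb⟩ := Finset.mem_product.1 hmem
      have hdeg : a.1 + a.2 + (b.1 + b.2) = e₁.1 + e₁.2 + (e₂.1 + e₂.2) := by
        have h1 := congrArg Prod.fst heq
        have h2 := congrArg Prod.snd heq
        simp only [Prod.fst_add, Prod.snd_add] at h1 h2
        omega
      have hae : a = e₁ := by
        by_contra hne
        have d1 := hm₁ a ha hne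
        have d2 : e₂.1 + e₂.2 ≤ b.1 + b.2 := by
          by_cases hbe : b = e₂
          · rw [hbe]
          · exact le_of_lt (hm₂ b hb hbe)
        omega
      subst hae
      have : b = e₂ := by
        have h1 := congrArg Prod.fst heq
        have h2 := congrArg Prod.snd heq
        simp only [Prod.fst_add, Prod.snd_add] at h1 h2
        exact Prod.ext (by omega) (by omega)
      rw [this]
  apply rep_of_lrep (lrep_mul hl₁ hl₂)
  · exact Finset.mem_image_of_mem (fun pr : (ℤ×ℤ)×(ℤ×ℤ) => pr.1 + pr.2)
      (Finset.mem_product.2 (⟨he₁, he₂⟩ : (e₁, e₂).1 ∈ D₁ ∧ (e₁, e₂).2 ∈ D₂))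
  · rintro d hd hne
    obtain ⟨pr, hpr, rfl⟩ := Finset.mem_image.1 hd
    obtain ⟨ha, hb⟩ := Finset.mem_product.1 hpr
    have d1 : e₁.1 + e₁.2 ≤ pr.1.1 + pr.1.2 := by
      by_cases h : pr.1 = e₁
      · rw [h]
      · exact le_of_lt (hm₁ _ ha h)
    have d2 : e₂.1 + e₂.2 ≤ pr.2.1 + pr.2.2 := by
      by_cases h : pr.2 = e₂
      · rw [h]
      · exact le_of_lt (hm₂ _ hb h)
    simp only [Prod.fst_add, Prod.snd_add]
    rcases eq_or_ne pr.1 e₁ with h1 | h1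
    · rcases eq_or_ne pr.2 e₂ with h2 | h2
      · exfalso; apply hne; rw [← h1, ← h2]
      · have := hm₂ _ hb h2; omega
    · have := hm₁ _ ha h1; omega
  · refine ⟨α₁ + α₂, β₁ + β₂, ?_⟩
    rw [hfib, Finset.sum_singleton, hc₁, hc₂,
      zpow_add₀ (p_ne_zero K 0 ℓ₁), zpow_add₀ (p_ne_zero K 1 ℓ₂)]
    ring

lemma rep_one (hℓ₁ : 1 ≤ ℓ₁) (hℓ₂ : 1 ≤ ℓ₂) : Rep K ℓ₁ ℓ₂ (1 : FF K) (0, 0) := by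
  have := rep_monomial (K := K) hℓ₁ hℓ₂ 0 0 (0, 0)
  rwa [zpow_zero, zpow_zero, mon_zero, one_mul, one_mul] at this

lemma rep_pow (hℓ₁ : 1 ≤ ℓ₁) (hℓ₂ : 1 ≤ ℓ₂) {f : FF K} {e : ℤ × ℤ}
    (h : Rep K ℓ₁ ℓ₂ f e) : ∀ n : ℕ, Rep K ℓ₁ ℓ₂ (f ^ n) ((n : ℤ) * e.1, (n : ℤ) * e.2)
  | 0 => by
      rw [pow_zero]
      simpa using rep_one hℓ₁ hℓ₂
  | (n + 1) => by
      rw [pow_succ]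
      have := rep_mul hℓ₁ hℓ₂ (rep_pow hℓ₁ hℓ₂ h n) h
      have heq : (((n : ℤ) * e.1, (n : ℤ) * e.2) : ℤ × ℤ) + e
          = (((n + 1 : ℕ) : ℤ) * e.1, ((n + 1 : ℕ) : ℤ) * e.2) := by
        apply Prod.ext <;> simp <;> push_cast <;> ring
      rwa [heq] at this

lemma lrep_add {f g : FF K} {D₁ D₂ : Finset (ℤ × ℤ)} {c₁ c₂ : ℤ × ℤ → FF K}
    (h₁ : LRep K ℓ₁ ℓ₂ f D₁ c₁) (h₂ : LRep K ℓ₁ ℓ₂ g D₂ c₂) :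
    LRep K ℓ₁ ℓ₂ (f + g) (D₁ ∪ D₂)
      (fun d => (if d ∈ D₁ then c₁ d else 0) + (if d ∈ D₂ then c₂ d else 0)) := by
  classical
  constructor
  · intro d _
    apply Subring.add_mem
    · by_cases hd : d ∈ D₁
      · rw [if_pos hd]; exact h₁.1 d hd
      · rw [if_neg hd]; exact Subring.zero_mem _
    · by_cases hd : d ∈ D₂
      · rw [if_pos hd]; exact h₂.1 d hd
      · rw [if_neg hd]; exact Subring.zero_mem _
  · have e1 : ∑ d ∈ D₁ ∪ D₂, (if d ∈ D₁ then c₁ d else 0) * mon K d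
        = ∑ d ∈ D₁, c₁ d * mon K d := by
      rw [← Finset.sum_subset Finset.subset_union_left
        (fun d _ hd => by rw [if_neg hd, zero_mul])]
      exact Finset.sum_congr rfl (fun d hd => by rw [if_pos hd])
    have e2 : ∑ d ∈ D₁ ∪ D₂, (if d ∈ D₂ then c₂ d else 0) * mon K d
        = ∑ d ∈ D₂, c₂ d * mon K d := by
      rw [← Finset.sum_subset Finset.subset_union_right
        (fun d _ hd => by rw [if_neg hd, zero_mul])]
      exact Finset.sum_congr rfl (fun d hd => by rw [if_pos hd])
    rw [h₁.2, h₂.2, ← e1, ← e2, ← Finset.sum_add_distrib]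
    exact Finset.sum_congr rfl (fun d _ => by ring)

lemma above_of_rep {f : FF K} {e : ℤ × ℤ} {ν : ℤ} (h : Rep K ℓ₁ ℓ₂ f e)
    (hν : ν < e.1 + e.2) : Above K ℓ₁ ℓ₂ f ν := by
  obtain ⟨D, c, hl, _, _, hm, _⟩ := h
  refine ⟨D, c, hl, fun d hd => ?_⟩
  by_cases hde : d = e
  · rw [hde]; exact hν
  · exact lt_trans hν (hm d hd hde)

lemma above_zero (ν : ℤ) : Above K ℓ₁ ℓ₂ (0 : FF K) ν :=
  ⟨∅, fun _ => 0, ⟨fun d hd => absurd hd (Finset.notMem_empty d), by rw [Finset.sum_empty]⟩,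
    fun d hd => absurd hd (Finset.notMem_empty d)⟩

lemma above_add {f g : FF K} {ν : ℤ} (h₁ : Above K ℓ₁ ℓ₂ f ν) (h₂ : Above K ℓ₁ ℓ₂ g ν) :
    Above K ℓ₁ ℓ₂ (f + g) ν := by
  classical
  obtain ⟨D₁, c₁, hl₁, hd₁⟩ := h₁
  obtain ⟨D₂, c₂, hl₂, hd₂⟩ := h₂
  refine ⟨_, _, lrep_add hl₁ hl₂, fun d hd => ?_⟩
  rcases Finset.mem_union.1 hd with hd | hd
  · exact hd₁ d hd
  · exact hd₂ d hd

lemma above_cmul {f c0 : FF K} {ν : ℤ} (hc : c0 ∈ CoeffRing K ℓ₁ ℓ₂)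
    (h : Above K ℓ₁ ℓ₂ f ν) : Above K ℓ₁ ℓ₂ (c0 * f) ν := by
  obtain ⟨D, c, hl, hdeg⟩ := h
  refine ⟨D, fun d => c0 * c d, ⟨fun d hd => mul_mem hc (hl.1 d hd), ?_⟩, hdeg⟩
  rw [hl.2, Finset.mul_sum]
  exact Finset.sum_congr rfl (fun d _ => by ring)

lemma above_sum {ι : Type} {s : Finset ι} {F : ι → FF K} {ν : ℤ}
    (h : ∀ i ∈ s, Above K ℓ₁ ℓ₂ (F i) ν) : Above K ℓ₁ ℓ₂ (∑ i ∈ s, F i) ν := by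
  classical
  induction s using Finset.induction_on with
  | empty => rw [Finset.sum_empty]; exact above_zero ν
  | insert _ _ hni ih =>
    rw [Finset.sum_insert hni]
    exact above_add (h _ (Finset.mem_insert_self _ _))
      (ih (fun i hi => h i (Finset.mem_insert_of_mem hi)))

lemma rep_add_above {f g : FF K} {e : ℤ × ℤ} (h₁ : Rep K ℓ₁ ℓ₂ f e)
    (h₂ : Above K ℓ₁ ℓ₂ g (e.1 + e.2)) : Rep K ℓ₁ ℓ₂ (f + g) e := by
  classical
  obtain ⟨D₁, c₁, hl₁, hnz₁, he₁, hm₁, α, β, hc₁⟩ := h₁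
  obtain ⟨D₂, c₂, hl₂, hd₂⟩ := h₂
  have heD₂ : e ∉ D₂ := fun h => lt_irrefl _ (hd₂ e h)
  apply rep_of_lrep (lrep_add hl₁ hl₂)
  · exact Finset.mem_union_left _ he₁
  · intro d hd hne
    rcases Finset.mem_union.1 hd with hd | hd
    · exact hm₁ d hd hne
    · exact hd₂ d hd
  · refine ⟨α, β, ?_⟩
    rw [if_pos he₁, if_neg heD₂, add_zero, hc₁]

lemma laurent_lrep {f : FF K} (h : f ∈ LaurentRing K ℓ₁ ℓ₂) :
    ∃ D c, LRep K ℓ₁ ℓ₂ f D c := by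
  classical
  induction h using Subring.closure_induction with
  | mem z hz =>
    have hconst : ∀ w : FF K, w ∈ CoeffRing K ℓ₁ ℓ₂ → ∃ D c, LRep K ℓ₁ ℓ₂ w D c := by
      intro w hw
      refine ⟨{((0 : ℤ), (0 : ℤ))}, fun _ => w, ⟨fun d _ => hw, ?_⟩⟩
      rw [Finset.sum_singleton, mon_zero, mul_one]
    have hmono : ∀ d : ℤ × ℤ, ∃ D c, LRep K ℓ₁ ℓ₂ (mon K d) D c := by
      intro d
      refine ⟨{d}, fun _ => 1, ⟨fun d _ => Subring.one_mem _, ?_⟩⟩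
      rw [Finset.sum_singleton, one_mul]
    rcases hz with (hz | hz) | hz
    · exact hconst z (Subring.subset_closure (Or.inl (Or.inl hz)))
    · exact hconst z (Subring.subset_closure (Or.inl (Or.inr hz)))
    · rcases hz with rfl | hz
      · exact hconst _ p1l_inv_mem
      · rcases hz with rfl | hz
        · exact hconst _ p2l_inv_mem
        · rcases hz with rfl | hz
          · have := hmono (1, 0)
            rwa [show mon K (1, 0) = x1 K by simp [mon]] at this
          · rcases hz with rfl | hz
            · have := hmono (-1, 0)
              rwa [show mon K (-1, 0) = (x1 K)⁻¹ by simp [mon]] at this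
            · rcases hz with rfl | hz
              · have := hmono (0, 1)
                rwa [show mon K (0, 1) = x2 K by simp [mon]] at this
              · rw [Set.mem_singleton_iff] at hz
                subst hz
                have := hmono (0, -1)
                rwa [show mon K (0, -1) = (x2 K)⁻¹ by simp [mon]] at this
  | zero =>
    exact ⟨∅, fun _ => 0, ⟨fun d hd => absurd hd (Finset.notMem_empty d),
      by rw [Finset.sum_empty]⟩⟩
  | one =>
    refine ⟨{((0 : ℤ), (0 : ℤ))}, fun _ => 1, ⟨fun d _ => Subring.one_mem _, ?_⟩⟩
    rw [Finset.sum_singleton, mon_zero, mul_one]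
  | add a b _ _ iha ihb =>
    obtain ⟨D₁, c₁, hl₁⟩ := iha
    obtain ⟨D₂, c₂, hl₂⟩ := ihb
    exact ⟨_, _, lrep_add hl₁ hl₂⟩
  | neg a _ ih =>
    obtain ⟨D, c, hl⟩ := ih
    refine ⟨D, fun d => -c d, ⟨fun d hd => Subring.neg_mem _ (hl.1 d hd), ?_⟩⟩
    rw [hl.2, ← Finset.sum_neg_distrib]
    exact Finset.sum_congr rfl (fun d _ => by ring)
  | mul a b _ _ iha ihb =>
    obtain ⟨D₁, c₁, hl₁⟩ := iha
    obtain ⟨D₂, c₂, hl₂⟩ := ihb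
    exact ⟨_, _, lrep_mul hl₁ hl₂⟩

/-- the key cancellation lemma: if `f = g·t` with `f, g` having strict minimal terms and
`t` in the Laurent ring, then `t` has a strict minimal term at the difference exponent. -/
lemma rep_cancel (hℓ₁ : 1 ≤ ℓ₁) (hℓ₂ : 1 ≤ ℓ₂) {f g t : FF K} {e₁ e₂ : ℤ × ℤ}
    (hf : Rep K ℓ₁ ℓ₂ f e₁) (hg : Rep K ℓ₁ ℓ₂ g e₂) (ht : t ∈ LaurentRing K ℓ₁ ℓ₂)
    (heq : f = g * t) : Rep K ℓ₁ ℓ₂ t (e₁ - e₂) := by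
  classical
  obtain ⟨D₀, c₀, hl₀⟩ := laurent_lrep ht
  -- filter out zero coefficients
  set D : Finset (ℤ × ℤ) := D₀.filter (fun d => c₀ d ≠ 0) with hD
  have hlt : LRep K ℓ₁ ℓ₂ t D c₀ := by
    refine ⟨fun d hd => hl₀.1 d (Finset.mem_filter.1 hd).1, ?_⟩
    rw [hl₀.2]
    symm
    apply Finset.sum_filter_of_ne
    intro d _ hne h0
    exact hne (by rw [h0, zero_mul])
  have hne0 : ∀ d ∈ D, c₀ d ≠ 0 := fun d hd => (Finset.mem_filter.1 hd).2
  -- D is nonempty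
  have hDne : D.Nonempty := by
    rcases Finset.eq_empty_or_nonempty D with h | h
    · exfalso
      apply Rep.ne_zero hℓ₁ hℓ₂ hf
      rw [heq, hlt.2, h, Finset.sum_empty, mul_zero]
    · exact h
  -- minimal degree element of D
  obtain ⟨s, hsD, hsmin⟩ := Finset.exists_min_image D (fun d => d.1 + d.2) hDne
  obtain ⟨Dg, cg, hlg, hnzg, heg, hmg, α₂, β₂, hcg⟩ := hg
  obtain ⟨Df, cf, hlf, hnzf, hef, hmf, α₁, β₁, hcf⟩ := hf
  have hlprod := lrep_mul hlg hlt
  have hlf' : LRep K ℓ₁ ℓ₂ f ((Dg ×ˢ D).image fun pr => pr.1 + pr.2)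
      (fun d => ∑ pr ∈ (Dg ×ˢ D).filter (fun pr => pr.1 + pr.2 = d), cg pr.1 * c₀ pr.2) := by
    rw [heq]; exact hlprod
  have U := coeff_unique hℓ₁ hℓ₂ hlf hlf'
  -- the product coefficient at e₂ + d for a minimal-degree d of D is cg e₂ * c₀ d
  have fib : ∀ d ∈ D, d.1 + d.2 = s.1 + s.2 →
      (Dg ×ˢ D).filter (fun pr => pr.1 + pr.2 = e₂ + d) = {(e₂, d)} := by
    intro d hdD hdeg
    apply Finset.eq_singleton_iff_unique_mem.2
    refine ⟨Finset.mem_filter.2 ⟨Finset.mem_product.2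
      (⟨heg, hdD⟩ : (e₂, d).1 ∈ Dg ∧ (e₂, d).2 ∈ D), rfl⟩, ?_⟩
    rintro ⟨a, b⟩ hab
    obtain ⟨hmem, habeq⟩ := Finset.mem_filter.1 hab
    obtain ⟨ha, hb⟩ := Finset.mem_product.1 hmem
    have h1 := congrArg Prod.fst habeq
    have h2 := congrArg Prod.snd habeq
    simp only [Prod.fst_add, Prod.snd_add] at h1 h2
    have hbs : s.1 + s.2 ≤ b.1 + b.2 := hsmin b hb
    have hae : a = e₂ := by
      by_contra hne
      have := hmg a ha hne
      omega
    subst hae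
    have : b = d := Prod.ext (by omega) (by omega)
    rw [this]
  -- the product coefficient at e₂ + d is nonzero, hence e₂ + d lies in Df
  have inDf : ∀ d ∈ D, d.1 + d.2 = s.1 + s.2 → (e₂ + d) ∈ Df ∧
      cf (e₂ + d) = cg e₂ * c₀ d := by
    intro d hdD hdeg
    have hval : (∑ pr ∈ (Dg ×ˢ D).filter (fun pr => pr.1 + pr.2 = e₂ + d),
        cg pr.1 * c₀ pr.2) = cg e₂ * c₀ d := by
      rw [fib d hdD hdeg, Finset.sum_singleton]
    have hnz : cg e₂ * c₀ d ≠ 0 := mul_ne_zero (hnzg e₂ heg) (hne0 d hdD)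
    have hmemprod : (e₂ + d) ∈ (Dg ×ˢ D).image (fun pr => pr.1 + pr.2) :=
      Finset.mem_image_of_mem (fun pr : (ℤ×ℤ)×(ℤ×ℤ) => pr.1 + pr.2)
        (Finset.mem_product.2 (⟨heg, hdD⟩ : (e₂, d).1 ∈ Dg ∧ (e₂, d).2 ∈ D))
    have hU := U (e₂ + d)
    rw [if_pos hmemprod, hval] at hU
    by_cases hin : (e₂ + d) ∈ Df
    · rw [if_pos hin] at hU
      exact ⟨hin, hU⟩
    · rw [if_neg hin] at hU
      exact absurd hU.symm hnz
  -- the minimal exponent of f is e₂ + s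
  have hes : e₁ = e₂ + s := by
    -- e₁ ∈ Df has min degree; e₂ + s ∈ Df
    have h1 := (inDf s hsD rfl).1
    -- e₁ is in the product image too, so deg e₁ ≥ deg e₂ + deg s
    have he₁prod : e₁ ∈ (Dg ×ˢ D).image (fun pr => pr.1 + pr.2) := by
      have hU := U e₁
      rw [if_pos hef] at hU
      by_contra hnot
      rw [if_neg hnot] at hU
      exact hnzf e₁ hef hU
    obtain ⟨pr, hpr, hpreq⟩ := Finset.mem_image.1 he₁prod
    obtain ⟨ha, hb⟩ := Finset.mem_product.1 hpr
    have d1 : e₂.1 + e₂.2 ≤ pr.1.1 + pr.1.2 := by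
      by_cases h : pr.1 = e₂
      · rw [h]
      · exact le_of_lt (hmg _ ha h)
    have d2 : s.1 + s.2 ≤ pr.2.1 + pr.2.2 := hsmin _ hb
    have hge : e₂.1 + e₂.2 + (s.1 + s.2) ≤ e₁.1 + e₁.2 := by
      have h1 := congrArg Prod.fst hpreq
      have h2 := congrArg Prod.snd hpreq
      simp only [Prod.fst_add, Prod.snd_add] at h1 h2
      omega
    have hle : e₁.1 + e₁.2 ≤ (e₂ + s).1 + (e₂ + s).2 := by
      by_cases h : (e₂ + s) = e₁
      · rw [h]
      · exact le_of_lt (hmf _ h1 h)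
    simp only [Prod.fst_add, Prod.snd_add] at hle
    by_cases h : (e₂ + s) = e₁
    · exact h.symm
    · exfalso
      have := hmf _ h1 h
      simp only [Prod.fst_add, Prod.snd_add] at this
      omega
  -- conclude : s is the strict minimum of D
  have hstrict : ∀ d ∈ D, d ≠ s → s.1 + s.2 < d.1 + d.2 := by
    intro d hdD hne
    rcases lt_or_eq_of_le (hsmin d hdD) with h | h
    · exact h
    · exfalso
      have h1 := (inDf d hdD h.symm).1
      have hdeq : e₂ + d = e₁ := by
        by_contra hne2
        have := hmf _ h1 hne2
        rw [hes] at this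
        simp only [Prod.fst_add, Prod.snd_add] at this
        omega
      apply hne
      rw [hes] at hdeq
      have h1 := congrArg Prod.fst hdeq
      have h2 := congrArg Prod.snd hdeq
      simp only [Prod.fst_add, Prod.snd_add] at h1 h2
      exact Prod.ext (by omega) (by omega)
  have hse : s = e₁ - e₂ := by rw [hes]; apply Prod.ext <;> simp
  -- coefficient of t at s
  have hcoef : c₀ s = p K 0 ℓ₁ ^ (α₁ - α₂) * p K 1 ℓ₂ ^ (β₁ - β₂) := by
    have h2 := (inDf s hsD rfl).2
    rw [← hes, hcf, hcg] at h2
    have hne : p K 0 ℓ₁ ^ α₂ * p K 1 ℓ₂ ^ β₂ ≠ 0 := ppow_ne_zero α₂ β₂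
    have hdiv : c₀ s = (p K 0 ℓ₁ ^ α₁ * p K 1 ℓ₂ ^ β₁) / (p K 0 ℓ₁ ^ α₂ * p K 1 ℓ₂ ^ β₂) := by
      rw [eq_div_iff hne, h2]
      ring
    rw [hdiv, zpow_sub₀ (p_ne_zero K 0 ℓ₁), zpow_sub₀ (p_ne_zero K 1 ℓ₂), div_mul_div_comm]
  rw [← hse]
  refine ⟨D, c₀, hlt, hne0, hsD, hstrict, α₁ - α₂, β₁ - β₂, hcoef⟩

/-- evaluating an exchange polynomial at an element with negative minimal degree -/
lemma rep_eval_neg (hℓ₁ : 1 ≤ ℓ₁) (hℓ₂ : 1 ≤ ℓ₂) {f : FF K} {e : ℤ × ℤ}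
    (hf : Rep K ℓ₁ ℓ₂ f e) (hneg : e.1 + e.2 < 0) {ℓ : ℕ} (hℓ : 1 ≤ ℓ) {Q : ℕ → FF K}
    (hQmem : ∀ j ≤ ℓ, Q j ∈ CoeffRing K ℓ₁ ℓ₂)
    (hQtop : ∃ α β : ℤ, Q ℓ = p K 0 ℓ₁ ^ α * p K 1 ℓ₂ ^ β) :
    Rep K ℓ₁ ℓ₂ (∑ j ∈ Finset.range (ℓ + 1), Q j * f ^ j) ((ℓ : ℤ) * e.1, (ℓ : ℤ) * e.2) := by
  obtain ⟨α, β, hQl⟩ := hQtop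
  have hmain : Rep K ℓ₁ ℓ₂ (Q ℓ * f ^ ℓ) ((ℓ : ℤ) * e.1, (ℓ : ℤ) * e.2) := by
    have h1 : Rep K ℓ₁ ℓ₂ (Q ℓ) (0, 0) := by
      have := rep_monomial (K := K) hℓ₁ hℓ₂ α β (0, 0)
      rwa [mon_zero, mul_one, ← hQl] at this
    have h2 := rep_mul hℓ₁ hℓ₂ h1 (rep_pow hℓ₁ hℓ₂ hf ℓ)
    have : ((0, 0) : ℤ × ℤ) + ((ℓ : ℤ) * e.1, (ℓ : ℤ) * e.2)
        = ((ℓ : ℤ) * e.1, (ℓ : ℤ) * e.2) := by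
      apply Prod.ext <;> simp
    rwa [this] at h2
  have hrest : Above K ℓ₁ ℓ₂ (∑ j ∈ Finset.range ℓ, Q j * f ^ j) ((ℓ : ℤ) * e.1 + (ℓ : ℤ) * e.2) := by
    apply above_sum
    intro j hj
    have hjl : j < ℓ := Finset.mem_range.1 hj
    apply above_cmul (hQmem j (le_of_lt hjl))
    apply above_of_rep (rep_pow hℓ₁ hℓ₂ hf j)
    have : ((ℓ : ℤ) - (j : ℤ)) * (e.1 + e.2) < 0 := by
      apply mul_neg_of_pos_of_neg _ hneg
      have : (j : ℤ) < (ℓ : ℤ) := by exact_mod_cast hjl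
      linarith
    simp only []
    nlinarith [this]
  have hsum : ∑ j ∈ Finset.range (ℓ + 1), Q j * f ^ j
      = Q ℓ * f ^ ℓ + ∑ j ∈ Finset.range ℓ, Q j * f ^ j := by
    rw [Finset.sum_range_succ]; ring
  rw [hsum]
  exact rep_add_above hmain hrest

/-- evaluating an exchange polynomial at an element with positive minimal degree -/
lemma rep_eval_pos (hℓ₁ : 1 ≤ ℓ₁) (hℓ₂ : 1 ≤ ℓ₂) {f : FF K} {e : ℤ × ℤ}
    (hf : Rep K ℓ₁ ℓ₂ f e) (hpos : 0 < e.1 + e.2) {ℓ : ℕ} {Q : ℕ → FF K}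
    (hQmem : ∀ j ≤ ℓ, Q j ∈ CoeffRing K ℓ₁ ℓ₂) (hQ0 : Q 0 = 1) :
    Rep K ℓ₁ ℓ₂ (∑ j ∈ Finset.range (ℓ + 1), Q j * f ^ j) (0, 0) := by
  have hmain : Rep K ℓ₁ ℓ₂ (Q 0 * f ^ 0) (0, 0) := by
    rw [hQ0, pow_zero, one_mul]
    exact rep_one hℓ₁ hℓ₂
  have hrest : Above K ℓ₁ ℓ₂ (∑ j ∈ Finset.range ℓ, Q (j + 1) * f ^ (j + 1)) (0 + 0) := by
    apply above_sum
    intro j hj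
    have hjl : j < ℓ := Finset.mem_range.1 hj
    apply above_cmul (hQmem (j + 1) hjl)
    apply above_of_rep (rep_pow hℓ₁ hℓ₂ hf (j + 1))
    simp only []
    have h1 : (0 : ℤ) < ((j : ℤ) + 1) * (e.1 + e.2) := by positivity
    push_cast
    nlinarith [h1]
  have hsum : ∑ j ∈ Finset.range (ℓ + 1), Q j * f ^ j
      = Q 0 * f ^ 0 + ∑ j ∈ Finset.range ℓ, Q (j + 1) * f ^ (j + 1) := by
    rw [Finset.sum_range_succ']; ring
  rw [hsum]
  have : ((0 : ℤ), (0 : ℤ)).1 + ((0 : ℤ), (0 : ℤ)).2 = 0 + 0 := by simp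
  exact rep_add_above hmain (by rwa [← this] at hrest)

end Reps

/-! ### Part 3 : the abstract divisibility lemma -/

section Divis

/-- the exchange-relation divisibility argument, in an arbitrary commutative ring -/
lemma exchange_div {R : Type*} [CommRing R] (g y w z c : R) (ℓ ℓ' : ℕ)
    (Q' Rc S : ℕ → R) (hQ'0 : Q' 0 = 1)
    (h1 : y * w = ∑ j ∈ Finset.range (ℓ' + 1), Q' j * g ^ j)
    (h2 : g * z = ∑ i ∈ Finset.range (ℓ + 1), Rc i * w ^ i)
    (hS : ∀ j ≤ ℓ, S j = c * Rc (ℓ - j)) :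
    ∃ t, ∑ j ∈ Finset.range (ℓ + 1), S j * y ^ j = g * t := by
  classical
  set I : Ideal R := Ideal.span {g} with hI
  set π : R →+* R ⧸ I := Ideal.Quotient.mk I with hπ
  have hg : π g = 0 := Ideal.Quotient.eq_zero_iff_mem.2 (Ideal.subset_span rfl)
  have hyw : π y * π w = 1 := by
    rw [← map_mul, h1, map_sum]
    have : ∀ j ∈ Finset.range (ℓ' + 1), π (Q' j * g ^ j) = if j = 0 then 1 else 0 := by
      intro j _
      rw [map_mul, map_pow, hg]
      by_cases hj : j = 0
      · rw [hj, pow_zero, mul_one, if_pos rfl, hQ'0, map_one]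
      · rw [zero_pow hj, mul_zero, if_neg hj]
    rw [Finset.sum_congr rfl this, Finset.sum_ite_eq' (Finset.range (ℓ' + 1)) 0 (fun _ => (1 : R ⧸ I))]
    rw [if_pos (Finset.mem_range.2 (Nat.succ_pos ℓ'))]
  have hRw : ∑ i ∈ Finset.range (ℓ + 1), π (Rc i) * π w ^ i = 0 := by
    have : ∑ i ∈ Finset.range (ℓ + 1), π (Rc i) * π w ^ i = π (g * z) := by
      rw [h2, map_sum]
      exact Finset.sum_congr rfl (fun i _ => by rw [map_mul, map_pow])
    rw [this, map_mul, hg, zero_mul]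
  have hA : π (∑ j ∈ Finset.range (ℓ + 1), S j * y ^ j) * π w ^ ℓ = 0 := by
    rw [map_sum, Finset.sum_mul]
    have step : ∀ j ∈ Finset.range (ℓ + 1),
        π (S j * y ^ j) * π w ^ ℓ = π c * (π (Rc (ℓ - j)) * π w ^ (ℓ - j)) := by
      intro j hj
      have hjℓ : j ≤ ℓ := Nat.lt_succ_iff.1 (Finset.mem_range.1 hj)
      rw [map_mul, map_pow, hS j hjℓ, map_mul]
      have hsplit : π w ^ ℓ = π w ^ j * π w ^ (ℓ - j) := by
        rw [← pow_add]
        congr 1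
        omega
      rw [hsplit]
      have : π y ^ j * π w ^ j = 1 := by
        rw [← mul_pow, hyw, one_pow]
      calc π c * π (Rc (ℓ - j)) * π y ^ j * (π w ^ j * π w ^ (ℓ - j))
          = π c * (π (Rc (ℓ - j)) * π w ^ (ℓ - j)) * (π y ^ j * π w ^ j) := by ring
        _ = π c * (π (Rc (ℓ - j)) * π w ^ (ℓ - j)) := by rw [this, mul_one]
    rw [Finset.sum_congr rfl step, ← Finset.mul_sum]
    have hreflect : ∑ j ∈ Finset.range (ℓ + 1), π (Rc (ℓ - j)) * π w ^ (ℓ - j)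
        = ∑ i ∈ Finset.range (ℓ + 1), π (Rc i) * π w ^ i := by
      exact Finset.sum_range_reflect (fun i => π (Rc i) * π w ^ i) (ℓ + 1)
    rw [hreflect, hRw, mul_zero]
  have hA0 : π (∑ j ∈ Finset.range (ℓ + 1), S j * y ^ j) = 0 := by
    have h3 : π (∑ j ∈ Finset.range (ℓ + 1), S j * y ^ j) * (π w ^ ℓ * π y ^ ℓ) = 0 := by
      rw [← mul_assoc, hA, zero_mul]
    have h4 : π w ^ ℓ * π y ^ ℓ = 1 := by
      rw [← mul_pow, mul_comm, hyw, one_pow]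
    rwa [h4, mul_one] at h3
  have := Ideal.Quotient.eq_zero_iff_mem.1 hA0
  rw [Ideal.mem_span_singleton'] at this
  obtain ⟨a, ha⟩ := this
  exact ⟨a, by rw [← ha]; ring⟩

end Divis

/-! ### Part 4 : integer d-vector dynamics -/

section Dvect
variable (ℓ₁ ℓ₂ : ℕ)

/-- the invariant quadratic form -/
def qf (u : ℤ × ℤ) : ℤ :=
  (ℓ₂ : ℤ) * u.1 ^ 2 + (ℓ₁ : ℤ) * u.2 ^ 2 - (ℓ₁ : ℤ) * (ℓ₂ : ℤ) * u.1 * u.2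

/-- the associated (doubled) bilinear form -/
def bf (u v : ℤ × ℤ) : ℤ :=
  2 * (ℓ₂ : ℤ) * u.1 * v.1 + 2 * (ℓ₁ : ℤ) * u.2 * v.2
    - (ℓ₁ : ℤ) * (ℓ₂ : ℤ) * (u.1 * v.2 + u.2 * v.1)

/-- the invariant carried along consecutive pairs of denominator vectors -/
def Phi (r r' : ℤ) (u v : ℤ × ℤ) : Prop :=
  qf ℓ₁ ℓ₂ u = r ∧ qf ℓ₁ ℓ₂ v = r' ∧
    ((bf ℓ₁ ℓ₂ u v = (ℓ₁ : ℤ) * (ℓ₂ : ℤ) ∧ ¬(0 < u.1 + u.2 ∧ 0 < v.1 + v.2)) ∨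
      (bf ℓ₁ ℓ₂ u v = -((ℓ₁ : ℤ) * (ℓ₂ : ℤ)) ∧ 0 < u.1 + u.2 ∧ 0 < v.1 + v.2))

variable {ℓ₁ ℓ₂}

lemma qf_neg (u : ℤ × ℤ) : qf ℓ₁ ℓ₂ (-u.1, -u.2) = qf ℓ₁ ℓ₂ u := by
  simp only [qf]; ring

lemma bf_symm (u v : ℤ × ℤ) : bf ℓ₁ ℓ₂ u v = bf ℓ₁ ℓ₂ v u := by
  simp only [bf]; ring

lemma qf_rule1 (ℓ : ℤ) (u v : ℤ × ℤ) :
    qf ℓ₁ ℓ₂ (ℓ * v.1 - u.1, ℓ * v.2 - u.2)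
      = ℓ ^ 2 * qf ℓ₁ ℓ₂ v + qf ℓ₁ ℓ₂ u - ℓ * bf ℓ₁ ℓ₂ u v := by
  simp only [qf, bf]; ring

lemma bf_rule1 (ℓ : ℤ) (u v : ℤ × ℤ) :
    bf ℓ₁ ℓ₂ v (ℓ * v.1 - u.1, ℓ * v.2 - u.2) = 2 * ℓ * qf ℓ₁ ℓ₂ v - bf ℓ₁ ℓ₂ u v := by
  simp only [qf, bf]; ring

lemma bf_neg (u v : ℤ × ℤ) : bf ℓ₁ ℓ₂ v (-u.1, -u.2) = -bf ℓ₁ ℓ₂ u v := by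
  simp only [bf]; ring

/-- a vector whose form value is `ℓ₁` or `ℓ₂` has nonzero coordinate sum -/
lemma sigma_ne_zero (hℓ₁ : 1 ≤ ℓ₁) (hℓ₂ : 1 ≤ ℓ₂) {u : ℤ × ℤ} {r : ℤ}
    (hq : qf ℓ₁ ℓ₂ u = r) (hr : r = (ℓ₁ : ℤ) ∨ r = (ℓ₂ : ℤ)) : u.1 + u.2 ≠ 0 := by
  intro h0
  have hu2 : u.2 = -u.1 := by omega
  rw [qf, hu2] at hq
  have hL1 : (1 : ℤ) ≤ (ℓ₁ : ℤ) := by exact_mod_cast hℓ₁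
  have hL2 : (1 : ℤ) ≤ (ℓ₂ : ℤ) := by exact_mod_cast hℓ₂
  have key : ∀ w : ℤ, w ≠ 0 →
      ((ℓ₂ : ℤ) + (ℓ₁ : ℤ) + (ℓ₁ : ℤ) * (ℓ₂ : ℤ))
        ≤ ((ℓ₂ : ℤ) + (ℓ₁ : ℤ) + (ℓ₁ : ℤ) * (ℓ₂ : ℤ)) * w ^ 2 := by
    intro w hw
    have h1 : 1 ≤ w ^ 2 := by
      rcases lt_or_gt_of_ne hw with h' | h' <;> nlinarith
    exact le_mul_of_one_le_right (by positivity) h1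
  rcases eq_or_ne u.1 0 with h | h
  · rw [h] at hq
    simp at hq
    rcases hr with rfl | rfl <;> omega
  · have hk := key u.1 h
    rcases hr with rfl | rfl <;> nlinarith [hk]

lemma phi_swap {r r' : ℤ} {u v : ℤ × ℤ} (h : Phi ℓ₁ ℓ₂ r r' u v) : Phi ℓ₁ ℓ₂ r' r v u := by
  obtain ⟨h1, h2, h3⟩ := h
  refine ⟨h2, h1, ?_⟩
  rw [bf_symm]
  tauto

/-- rule 1 step (negative current sum) preserves the invariant -/
lemma phi_step1 {r r' : ℤ} {u v : ℤ × ℤ} {ℓ : ℤ} (hΦ : Phi ℓ₁ ℓ₂ r r' u v)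
    (hσv : v.1 + v.2 < 0) (hℓr : ℓ * r' = (ℓ₁ : ℤ) * (ℓ₂ : ℤ)) :
    Phi ℓ₁ ℓ₂ r' r v (ℓ * v.1 - u.1, ℓ * v.2 - u.2) := by
  obtain ⟨h1, h2, h3⟩ := hΦ
  rcases h3 with ⟨hb, hns⟩ | ⟨hb, hσu, hσv'⟩
  · refine ⟨h2, ?_, Or.inl ⟨?_, ?_⟩⟩
    · rw [qf_rule1, h2, hb]
      have : ℓ ^ 2 * r' = ℓ * (ℓ * r') := by ring
      rw [this, hℓr, h1]
      ring
    · rw [bf_rule1, h2, hb]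
      have : 2 * ℓ * r' = 2 * (ℓ * r') := by ring
      rw [this, hℓr]
      ring
    · intro ⟨ha, _⟩
      omega
  · omega

/-- rule 2 step (positive current sum) preserves the invariant -/
lemma phi_step2 (hℓ₁ : 1 ≤ ℓ₁) (hℓ₂ : 1 ≤ ℓ₂) {r r' : ℤ} {u v : ℤ × ℤ}
    (hΦ : Phi ℓ₁ ℓ₂ r r' u v) (hσv : 0 < v.1 + v.2)
    (hr : r = (ℓ₁ : ℤ) ∨ r = (ℓ₂ : ℤ)) :
    Phi ℓ₁ ℓ₂ r' r v (-u.1, -u.2) := by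
  obtain ⟨h1, h2, h3⟩ := hΦ
  have hq : qf ℓ₁ ℓ₂ (-u.1, -u.2) = r := by rw [← h1]; exact qf_neg u
  rcases h3 with ⟨hb, hns⟩ | ⟨hb, hσu, hσv'⟩
  · -- b = L, and σu ≤ 0 since σv > 0; σu ≠ 0 so σu < 0, new σ(-u) > 0
    have hσu : u.1 + u.2 < 0 := by
      have hne := sigma_ne_zero hℓ₁ hℓ₂ h1 hr
      by_contra hc
      push_neg at hc
      exact hns ⟨lt_of_le_of_ne hc (Ne.symm hne), hσv⟩
    refine ⟨h2, hq, Or.inr ⟨?_, hσv, by omega⟩⟩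
    rw [bf_neg, hb]
  · -- b = -L, both positive; new state has σ(-u) < 0
    refine ⟨h2, hq, Or.inl ⟨?_, ?_⟩⟩
    · rw [bf_neg, hb]; ring
    · intro ⟨_, hcon⟩
      omega

end Dvect

/-! ### Part 5 : assembly -/

section Main
open Finset
variable (K : Type) [Field K] (ℓ₁ ℓ₂ : ℕ)

/-- extended coefficient family (`pp i 0 = 1`) -/
def pp (i : Fin 2) (j : ℕ) : FF K := if j = 0 then 1 else p K i j

/-- the coefficients of the exchange polynomial used at step `k` -/
def Qc (k : ℤ) : ℕ → FF K := fun j =>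
  if k % 4 = 1 then pp K 0 j
  else if k % 4 = 2 then pp K 1 j
  else if k % 4 = 3 then (p K 0 ℓ₁)⁻¹ * pp K 0 (ℓ₁ - j)
  else (p K 1 ℓ₂)⁻¹ * pp K 1 (ℓ₂ - j)

/-- the degree of the exchange polynomial used at step `k` -/
def dg (k : ℤ) : ℕ := if k % 2 = 1 then ℓ₁ else ℓ₂

/-- the reversal constant linking `Qc (k+2)` and `Qc k` -/
def cQ (k : ℤ) : FF K :=
  if k % 4 = 1 then (p K 0 ℓ₁)⁻¹
  else if k % 4 = 2 then (p K 1 ℓ₂)⁻¹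
  else if k % 4 = 3 then p K 0 ℓ₁
  else p K 1 ℓ₂

/-- the value of the quadratic form along the sequence -/
def rr (k : ℤ) : ℤ := if k % 2 = 1 then (ℓ₂ : ℤ) else (ℓ₁ : ℤ)

variable {K ℓ₁ ℓ₂}
variable (hℓ₁ : 1 ≤ ℓ₁) (hℓ₂ : 1 ≤ ℓ₂)

include hℓ₁ hℓ₂ in
lemma dg_pos : ∀ k, 1 ≤ dg ℓ₁ ℓ₂ k := by
  intro k
  unfold dg
  split <;> assumption

lemma dg_per (k : ℤ) : dg ℓ₁ ℓ₂ (k + 2) = dg ℓ₁ ℓ₂ k := by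
  unfold dg
  have : (k + 2) % 2 = k % 2 := by omega
  rw [this]

lemma rr_per (k : ℤ) : rr ℓ₁ ℓ₂ (k + 2) = rr ℓ₁ ℓ₂ k := by
  unfold rr
  have : (k + 2) % 2 = k % 2 := by omega
  rw [this]

lemma rr_cases (k : ℤ) : rr ℓ₁ ℓ₂ k = (ℓ₁ : ℤ) ∨ rr ℓ₁ ℓ₂ k = (ℓ₂ : ℤ) := by
  unfold rr
  split
  · exact Or.inr rfl
  · exact Or.inl rfl

lemma dg_rr (k : ℤ) : (dg ℓ₁ ℓ₂ k : ℤ) * rr ℓ₁ ℓ₂ k = (ℓ₁ : ℤ) * (ℓ₂ : ℤ) := by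
  unfold dg rr
  split
  · rfl
  · ring

lemma pp_zero (i : Fin 2) : pp K i 0 = 1 := if_pos rfl

lemma pp_ne {i : Fin 2} {j : ℕ} (h : j ≠ 0) : pp K i j = p K i j := if_neg h

lemma pp_mem {i : Fin 2} {j : ℕ} (h : (i = 0 ∧ j ≤ ℓ₁) ∨ (i = 1 ∧ j ≤ ℓ₂)) :
    pp K i j ∈ CoeffRing K ℓ₁ ℓ₂ := by
  unfold pp
  split
  · exact Subring.one_mem _
  · rename_i hj
    rcases h with ⟨rfl, h⟩ | ⟨rfl, h⟩
    · exact p_mem (by omega) (Or.inl ⟨h, rfl⟩)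
    · exact p_mem (by omega) (Or.inr ⟨h, rfl⟩)

lemma Qc_mem (k : ℤ) {j : ℕ} (hj : j ≤ dg ℓ₁ ℓ₂ k) : Qc K ℓ₁ ℓ₂ k j ∈ CoeffRing K ℓ₁ ℓ₂ := by
  have h4 : k % 4 = 0 ∨ k % 4 = 1 ∨ k % 4 = 2 ∨ k % 4 = 3 := by omega
  unfold dg at hj
  unfold Qc
  rcases h4 with hk | hk | hk | hk
  · rw [if_neg (by omega : ¬ k % 2 = 1)] at hj
    rw [if_neg (by omega : ¬ k % 4 = 1), if_neg (by omega : ¬ k % 4 = 2),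
      if_neg (by omega : ¬ k % 4 = 3)]
    exact mul_mem p2l_inv_mem (pp_mem (Or.inr ⟨rfl, by omega⟩))
  · rw [if_pos (by omega : k % 2 = 1)] at hj
    rw [if_pos hk]
    exact pp_mem (Or.inl ⟨rfl, hj⟩)
  · rw [if_neg (by omega : ¬ k % 2 = 1)] at hj
    rw [if_neg (by omega : ¬ k % 4 = 1), if_pos hk]
    exact pp_mem (Or.inr ⟨rfl, hj⟩)
  · rw [if_pos (by omega : k % 2 = 1)] at hj
    rw [if_neg (by omega : ¬ k % 4 = 1), if_neg (by omega : ¬ k % 4 = 2), if_pos hk]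
    exact mul_mem p1l_inv_mem (pp_mem (Or.inl ⟨rfl, by omega⟩))

include hℓ₁ hℓ₂ in
lemma Qc_zero (k : ℤ) : Qc K ℓ₁ ℓ₂ k 0 = 1 := by
  have h4 : k % 4 = 0 ∨ k % 4 = 1 ∨ k % 4 = 2 ∨ k % 4 = 3 := by omega
  unfold Qc
  rcases h4 with hk | hk | hk | hk
  · rw [if_neg (by omega : ¬ k % 4 = 1), if_neg (by omega : ¬ k % 4 = 2),
      if_neg (by omega : ¬ k % 4 = 3), Nat.sub_zero, pp_ne (by omega)]
    exact inv_mul_cancel₀ (p_ne_zero K 1 ℓ₂)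
  · rw [if_pos hk, pp_zero]
  · rw [if_neg (by omega : ¬ k % 4 = 1), if_pos hk, pp_zero]
  · rw [if_neg (by omega : ¬ k % 4 = 1), if_neg (by omega : ¬ k % 4 = 2), if_pos hk,
      Nat.sub_zero, pp_ne (by omega)]
    exact inv_mul_cancel₀ (p_ne_zero K 0 ℓ₁)

include hℓ₁ hℓ₂ in
lemma Qc_top (k : ℤ) :
    ∃ α β : ℤ, Qc K ℓ₁ ℓ₂ k (dg ℓ₁ ℓ₂ k) = p K 0 ℓ₁ ^ α * p K 1 ℓ₂ ^ β := by
  have h4 : k % 4 = 0 ∨ k % 4 = 1 ∨ k % 4 = 2 ∨ k % 4 = 3 := by omega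
  unfold Qc dg
  rcases h4 with hk | hk | hk | hk
  · refine ⟨0, -1, ?_⟩
    rw [if_neg (by omega : ¬ k % 4 = 1), if_neg (by omega : ¬ k % 4 = 2),
      if_neg (by omega : ¬ k % 4 = 3), if_neg (by omega : ¬ k % 2 = 1),
      Nat.sub_self, pp_zero, mul_one, zpow_zero, zpow_neg_one, one_mul]
  · refine ⟨1, 0, ?_⟩
    rw [if_pos hk, if_pos (by omega : k % 2 = 1), pp_ne (by omega), zpow_one, zpow_zero,
      mul_one]
  · refine ⟨0, 1, ?_⟩
    rw [if_neg (by omega : ¬ k % 4 = 1), if_pos hk, if_neg (by omega : ¬ k % 2 = 1),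
      pp_ne (by omega), zpow_one, zpow_zero, one_mul]
  · refine ⟨-1, 0, ?_⟩
    rw [if_neg (by omega : ¬ k % 4 = 1), if_neg (by omega : ¬ k % 4 = 2), if_pos hk,
      if_pos (by omega : k % 2 = 1), Nat.sub_self, pp_zero, mul_one, zpow_zero,
      zpow_neg_one, mul_one]

lemma Qc_per (k : ℤ) : Qc K ℓ₁ ℓ₂ (k + 4) = Qc K ℓ₁ ℓ₂ k := by
  funext j
  unfold Qc
  have : (k + 4) % 4 = k % 4 := by omega
  rw [this]

include hℓ₁ hℓ₂ in
lemma cQ_mem_laurent (k : ℤ) : cQ K ℓ₁ ℓ₂ k ∈ LaurentRing K ℓ₁ ℓ₂ := by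
  unfold cQ
  split
  · exact coeffRing_le_laurent p1l_inv_mem
  · split
    · exact coeffRing_le_laurent p2l_inv_mem
    · split
      · exact coeffRing_le_laurent (p_mem hℓ₁ (Or.inl ⟨le_rfl, rfl⟩))
      · exact coeffRing_le_laurent (p_mem hℓ₂ (Or.inr ⟨le_rfl, rfl⟩))

lemma Qc_rev (k : ℤ) {j : ℕ} (hj : j ≤ dg ℓ₁ ℓ₂ k) :
    Qc K ℓ₁ ℓ₂ (k + 2) j = cQ K ℓ₁ ℓ₂ k * Qc K ℓ₁ ℓ₂ k (dg ℓ₁ ℓ₂ k - j) := by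
  have h4 : k % 4 = 0 ∨ k % 4 = 1 ∨ k % 4 = 2 ∨ k % 4 = 3 := by omega
  unfold dg at hj
  unfold Qc cQ dg
  rcases h4 with hk | hk | hk | hk
  · rw [if_neg (by omega : ¬ k % 2 = 1)] at hj
    rw [if_neg (by omega : ¬ (k + 2) % 4 = 1), if_pos (by omega : (k + 2) % 4 = 2),
      if_neg (by omega : ¬ k % 4 = 1), if_neg (by omega : ¬ k % 4 = 2),
      if_neg (by omega : ¬ k % 4 = 3), if_neg (by omega : ¬ k % 4 = 1),
      if_neg (by omega : ¬ k % 4 = 2), if_neg (by omega : ¬ k % 4 = 3),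
      if_neg (by omega : ¬ k % 2 = 1),
      show ℓ₂ - (ℓ₂ - j) = j from by omega, ← mul_assoc,
      mul_inv_cancel₀ (p_ne_zero K 1 ℓ₂), one_mul]
  · rw [if_pos (by omega : k % 2 = 1)] at hj
    rw [if_neg (by omega : ¬ (k + 2) % 4 = 1), if_neg (by omega : ¬ (k + 2) % 4 = 2),
      if_pos (by omega : (k + 2) % 4 = 3), if_pos hk, if_pos hk,
      if_pos (by omega : k % 2 = 1)]
  · rw [if_neg (by omega : ¬ k % 2 = 1)] at hj
    rw [if_neg (by omega : ¬ (k + 2) % 4 = 1), if_neg (by omega : ¬ (k + 2) % 4 = 2),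
      if_neg (by omega : ¬ (k + 2) % 4 = 3), if_neg (by omega : ¬ k % 4 = 1),
      if_pos hk, if_neg (by omega : ¬ k % 4 = 1), if_pos hk,
      if_neg (by omega : ¬ k % 2 = 1)]
  · rw [if_pos (by omega : k % 2 = 1)] at hj
    rw [if_pos (by omega : (k + 2) % 4 = 1), if_neg (by omega : ¬ k % 4 = 1),
      if_neg (by omega : ¬ k % 4 = 2), if_pos hk, if_neg (by omega : ¬ k % 4 = 1),
      if_neg (by omega : ¬ k % 4 = 2), if_pos hk, if_pos (by omega : k % 2 = 1),
      show ℓ₁ - (ℓ₁ - j) = j from by omega, ← mul_assoc,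
      mul_inv_cancel₀ (p_ne_zero K 0 ℓ₁), one_mul]

lemma range_eq_insert_Icc (ℓ : ℕ) : Finset.range (ℓ + 1) = insert 0 (Finset.Icc 1 ℓ) := by
  ext a
  simp only [Finset.mem_range, Finset.mem_insert, Finset.mem_Icc]
  omega

/-- the plain exchange polynomials in sum form -/
lemma sum_form (i : Fin 2) (ℓ : ℕ) (z : FF K) :
    1 + ∑ j ∈ Finset.Icc 1 ℓ, p K i j * z ^ j
      = ∑ j ∈ Finset.range (ℓ + 1), pp K i j * z ^ j := by
  rw [range_eq_insert_Icc, Finset.sum_insert (by simp)]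
  rw [pp_zero, pow_zero, mul_one]
  congr 1
  apply Finset.sum_congr rfl
  intro j hj
  rw [pp_ne (by rw [Finset.mem_Icc] at hj; omega)]

lemma zpow_sub_helper {z : FF K} (hz : z ≠ 0) {j ℓ : ℕ} (hj : j ≤ ℓ) :
    z ^ ℓ * (z⁻¹) ^ j = z ^ (ℓ - j) := by
  rw [inv_pow, mul_inv_eq_iff_eq_mul₀ (pow_ne_zero j hz)]
  exact (pow_sub_mul_pow z hj).symm

/-- the reciprocal exchange polynomials in sum form -/
lemma bar_form (i : Fin 2) (ℓ : ℕ) {z : FF K} (hz : z ≠ 0) :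
    (p K i ℓ)⁻¹ * z ^ ℓ * (1 + ∑ j ∈ Finset.Icc 1 ℓ, p K i j * (z⁻¹) ^ j)
      = ∑ j ∈ Finset.range (ℓ + 1), ((p K i ℓ)⁻¹ * pp K i (ℓ - j)) * z ^ j := by
  have hR : ∑ j ∈ Finset.range (ℓ + 1), ((p K i ℓ)⁻¹ * pp K i (ℓ - j)) * z ^ j
      = ∑ j ∈ Finset.range (ℓ + 1), ((p K i ℓ)⁻¹ * pp K i j) * z ^ (ℓ - j) := by
    rw [← Finset.sum_range_reflect (fun j => ((p K i ℓ)⁻¹ * pp K i j) * z ^ (ℓ - j)) (ℓ + 1)]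
    apply Finset.sum_congr rfl
    intro j hj
    have hjℓ : j ≤ ℓ := Nat.lt_succ_iff.1 (Finset.mem_range.1 hj)
    rw [show ℓ + 1 - 1 - j = ℓ - j from by omega, show ℓ - (ℓ - j) = j from by omega]
  rw [hR, range_eq_insert_Icc, Finset.sum_insert (by simp)]
  rw [pp_zero, mul_one, Nat.sub_zero]
  rw [mul_add, mul_one, Finset.mul_sum]
  congr 1
  apply Finset.sum_congr rfl
  intro j hj
  rw [Finset.mem_Icc] at hj
  rw [pp_ne (by omega)]
  rw [← zpow_sub_helper hz hj.2]
  ring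

/-- the exchange relation in uniform sum form -/
lemma rel {x : ℤ → FF K} (hx : IsPreVarSeq K ℓ₁ ℓ₂ x) (k : ℤ) (hz : x k ≠ 0) :
    x (k + 1) * x (k - 1)
      = ∑ j ∈ Finset.range (dg ℓ₁ ℓ₂ k + 1), Qc K ℓ₁ ℓ₂ k j * (x k) ^ j := by
  have h := hx.2.2 k
  have h4 : k % 4 = 0 ∨ k % 4 = 1 ∨ k % 4 = 2 ∨ k % 4 = 3 := by omega
  unfold Qc dg
  rcases h4 with hk | hk | hk | hk
  · rw [if_neg (by omega : ¬ k % 4 = 1), if_neg (by omega : ¬ k % 4 = 2),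
      if_neg (by omega : ¬ k % 4 = 3)] at h
    rw [if_neg (by omega : ¬ k % 2 = 1), h]
    unfold P2bar P2
    rw [bar_form 1 ℓ₂ hz]
    apply Finset.sum_congr rfl
    intro j _
    rw [if_neg (by omega : ¬ k % 4 = 1), if_neg (by omega : ¬ k % 4 = 2),
      if_neg (by omega : ¬ k % 4 = 3)]
  · rw [if_pos hk] at h
    rw [if_pos (by omega : k % 2 = 1), h]
    unfold P1
    rw [sum_form]
    apply Finset.sum_congr rfl
    intro j _
    rw [if_pos hk]
  · rw [if_neg (by omega : ¬ k % 4 = 1), if_pos hk] at h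
    rw [if_neg (by omega : ¬ k % 2 = 1), h]
    unfold P2
    rw [sum_form]
    apply Finset.sum_congr rfl
    intro j _
    rw [if_neg (by omega : ¬ k % 4 = 1), if_pos hk]
  · rw [if_neg (by omega : ¬ k % 4 = 1), if_neg (by omega : ¬ k % 4 = 2), if_pos hk] at h
    rw [if_pos (by omega : k % 2 = 1), h]
    unfold P1bar P1
    rw [bar_form 0 ℓ₁ hz]
    apply Finset.sum_congr rfl
    intro j _
    rw [if_neg (by omega : ¬ k % 4 = 1), if_neg (by omega : ¬ k % 4 = 2), if_pos hk]

/-- transfer of the divisibility argument to the Laurent subring -/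
lemma div_step {g y w z cc : FF K}
    (hg : g ∈ LaurentRing K ℓ₁ ℓ₂) (hy : y ∈ LaurentRing K ℓ₁ ℓ₂)
    (hw : w ∈ LaurentRing K ℓ₁ ℓ₂) (hz : z ∈ LaurentRing K ℓ₁ ℓ₂)
    (hcc : cc ∈ LaurentRing K ℓ₁ ℓ₂)
    {ℓ ℓ' : ℕ} {Qa Qb Qs : ℕ → FF K}
    (hQa : ∀ j, j ≤ ℓ' → Qa j ∈ CoeffRing K ℓ₁ ℓ₂) (hQa0 : Qa 0 = 1)
    (hQb : ∀ i, i ≤ ℓ → Qb i ∈ CoeffRing K ℓ₁ ℓ₂)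
    (hQs : ∀ j, j ≤ ℓ → Qs j ∈ CoeffRing K ℓ₁ ℓ₂)
    (h1 : y * w = ∑ j ∈ Finset.range (ℓ' + 1), Qa j * g ^ j)
    (h2 : g * z = ∑ i ∈ Finset.range (ℓ + 1), Qb i * w ^ i)
    (hrev : ∀ j, j ≤ ℓ → Qs j = cc * Qb (ℓ - j)) :
    ∃ t ∈ LaurentRing K ℓ₁ ℓ₂, ∑ j ∈ Finset.range (ℓ + 1), Qs j * y ^ j = g * t := by
  classical
  set L := LaurentRing K ℓ₁ ℓ₂ with hL
  set G : L := ⟨g, hg⟩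
  set Y : L := ⟨y, hy⟩
  set W : L := ⟨w, hw⟩
  set Z : L := ⟨z, hz⟩
  set Cc : L := ⟨cc, hcc⟩
  set QaL : ℕ → L := fun j => if h : j ≤ ℓ' then
    ⟨Qa j, coeffRing_le_laurent (hQa j h)⟩ else 1 with hQaL
  set QbL : ℕ → L := fun i => if h : i ≤ ℓ then
    ⟨Qb i, coeffRing_le_laurent (hQb i h)⟩ else 1 with hQbL
  set QsL : ℕ → L := fun j => if h : j ≤ ℓ then
    ⟨Qs j, coeffRing_le_laurent (hQs j h)⟩ else 1 with hQsL
  have coe_sum : ∀ (n : ℕ) (F : ℕ → L),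
      ((∑ j ∈ Finset.range n, F j : L) : FF K) = ∑ j ∈ Finset.range n, ((F j : FF K)) :=
    fun n F => AddSubmonoidClass.coe_finset_sum F (Finset.range n)
  have h1' : Y * W = ∑ j ∈ Finset.range (ℓ' + 1), QaL j * G ^ j := by
    apply Subtype.ext
    rw [coe_sum]
    push_cast
    rw [h1]
    apply Finset.sum_congr rfl
    intro j hj
    have hjl : j ≤ ℓ' := Nat.lt_succ_iff.1 (Finset.mem_range.1 hj)
    rw [hQaL]
    simp only [dif_pos hjl]
    all_goals first
    | (push_cast; rfl)
    | push_cast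
  have h2' : G * Z = ∑ i ∈ Finset.range (ℓ + 1), QbL i * W ^ i := by
    apply Subtype.ext
    rw [coe_sum]
    push_cast
    rw [h2]
    apply Finset.sum_congr rfl
    intro i hi
    have hil : i ≤ ℓ := Nat.lt_succ_iff.1 (Finset.mem_range.1 hi)
    rw [hQbL]
    simp only [dif_pos hil]
    all_goals first
    | (push_cast; rfl)
    | push_cast
  have hQaL0 : QaL 0 = 1 := by
    rw [hQaL]
    simp only [dif_pos (Nat.zero_le ℓ')]
    exact Subtype.ext (by simpa using hQa0)
  have hrev' : ∀ j, j ≤ ℓ → QsL j = Cc * QbL (ℓ - j) := by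
    intro j hj
    rw [hQsL, hQbL]
    simp only [dif_pos hj, dif_pos (Nat.sub_le ℓ j)]
    apply Subtype.ext
    have := hrev j hj
    first
    | (push_cast; exact this)
    | simpa using this
  obtain ⟨t, ht⟩ := exchange_div G Y W Z Cc ℓ ℓ' QaL QbL QsL hQaL0 h1' h2'
    (fun j hj => hrev' j hj)
  refine ⟨(t : FF K), t.2, ?_⟩
  have := congrArg (fun v : L => (v : FF K)) ht
  rw [coe_sum] at this
  have hlhs : ∑ j ∈ Finset.range (ℓ + 1), ((QsL j * Y ^ j : L) : FF K)
      = ∑ j ∈ Finset.range (ℓ + 1), Qs j * y ^ j := by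
    apply Finset.sum_congr rfl
    intro j hj
    have hjl : j ≤ ℓ := Nat.lt_succ_iff.1 (Finset.mem_range.1 hj)
    rw [hQsL]
    simp only [dif_pos hjl]
    all_goals first
    | (push_cast; rfl)
    | push_cast
  rw [hlhs] at this
  rw [this]
  all_goals first
  | (push_cast; rfl)
  | push_cast

variable (K ℓ₁ ℓ₂) in
/-- the rolling window of four consecutive representations with invariants -/
def Window (x : ℤ → FF K) (k : ℤ) : Prop :=
  ∃ e₀ e₁ e₂ e₃ : ℤ × ℤ,
    Rep K ℓ₁ ℓ₂ (x k) e₀ ∧ Rep K ℓ₁ ℓ₂ (x (k + 1)) e₁ ∧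
    Rep K ℓ₁ ℓ₂ (x (k + 2)) e₂ ∧ Rep K ℓ₁ ℓ₂ (x (k + 3)) e₃ ∧
    Phi ℓ₁ ℓ₂ (rr ℓ₁ ℓ₂ k) (rr ℓ₁ ℓ₂ (k + 1)) e₀ e₁ ∧
    Phi ℓ₁ ℓ₂ (rr ℓ₁ ℓ₂ (k + 1)) (rr ℓ₁ ℓ₂ (k + 2)) e₁ e₂ ∧
    Phi ℓ₁ ℓ₂ (rr ℓ₁ ℓ₂ (k + 2)) (rr ℓ₁ ℓ₂ (k + 3)) e₂ e₃

include hℓ₁ hℓ₂ in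
lemma window_fwd {x : ℤ → FF K} (hx : IsPreVarSeq K ℓ₁ ℓ₂ x) {k : ℤ}
    (hW : Window K ℓ₁ ℓ₂ x k) : Window K ℓ₁ ℓ₂ x (k + 1) := by
  obtain ⟨e₀, e₁, e₂, e₃, R0, R1, R2, R3, P01, P12, P23⟩ := hW
  have nz0 := Rep.ne_zero hℓ₁ hℓ₂ R0
  have nz1 := Rep.ne_zero hℓ₁ hℓ₂ R1
  have nz2 := Rep.ne_zero hℓ₁ hℓ₂ R2
  have nz3 := Rep.ne_zero hℓ₁ hℓ₂ R3
  -- index bookkeeping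
  have i1 : k + 1 + 1 = k + 2 := by ring
  have i2 : k + 1 + 2 = k + 3 := by ring
  have i3 : k + 1 + 3 = k + 4 := by ring
  have i4 : k + 2 + 1 = k + 3 := by ring
  have i5 : k + 2 - 1 = k + 1 := by ring
  have i6 : k + 3 + 1 = k + 4 := by ring
  have i7 : k + 3 - 1 = k + 2 := by ring
  have hdg31 : dg ℓ₁ ℓ₂ (k + 3) = dg ℓ₁ ℓ₂ (k + 1) := by
    have := dg_per (ℓ₁ := ℓ₁) (ℓ₂ := ℓ₂) (k + 1)
    rwa [i2] at this
  have hrr42 : rr ℓ₁ ℓ₂ (k + 4) = rr ℓ₁ ℓ₂ (k + 2) := by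
    have := rr_per (ℓ₁ := ℓ₁) (ℓ₂ := ℓ₂) (k + 2)
    rwa [show k + 2 + 2 = k + 4 from by ring] at this
  -- the relations
  have hrel3 : x (k + 4) * x (k + 2)
      = ∑ j ∈ Finset.range (dg ℓ₁ ℓ₂ (k + 3) + 1), Qc K ℓ₁ ℓ₂ (k + 3) j * (x (k + 3)) ^ j := by
    have := rel hx (k + 3) nz3
    rwa [i6, i7] at this
  have hrel2 : x (k + 3) * x (k + 1)
      = ∑ j ∈ Finset.range (dg ℓ₁ ℓ₂ (k + 2) + 1), Qc K ℓ₁ ℓ₂ (k + 2) j * (x (k + 2)) ^ j := by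
    have := rel hx (k + 2) nz2
    rwa [i4, i5] at this
  have hrel1 : x (k + 2) * x k
      = ∑ j ∈ Finset.range (dg ℓ₁ ℓ₂ (k + 1) + 1), Qc K ℓ₁ ℓ₂ (k + 1) j * (x (k + 1)) ^ j := by
    have := rel hx (k + 1) nz1
    rwa [i1, show k + 1 - 1 = k from by ring] at this
  have hrev : ∀ j, j ≤ dg ℓ₁ ℓ₂ (k + 1) →
      Qc K ℓ₁ ℓ₂ (k + 3) j = cQ K ℓ₁ ℓ₂ (k + 1) * Qc K ℓ₁ ℓ₂ (k + 1) (dg ℓ₁ ℓ₂ (k + 1) - j) := by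
    intro j hj
    have := Qc_rev (K := K) (k + 1) hj
    rwa [i2] at this
  -- divisibility
  obtain ⟨t, htL, hteq⟩ := div_step R2.mem_laurent R3.mem_laurent R1.mem_laurent
    R0.mem_laurent (cQ_mem_laurent hℓ₁ hℓ₂ (k + 1))
    (fun j hj => Qc_mem (k + 2) hj) (Qc_zero hℓ₁ hℓ₂ (k + 2))
    (fun i hi => Qc_mem (k + 1) hi)
    (fun j hj => Qc_mem (k + 3) (by rwa [hdg31]))
    hrel2 hrel1 hrev
  rw [← hdg31] at hteq
  -- identify x (k+4)
  have hx4 : x (k + 4) = t := by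
    apply mul_right_cancel₀ nz2
    rw [hrel3, hteq]
    ring
  have hx4L : x (k + 4) ∈ LaurentRing K ℓ₁ ℓ₂ := by rw [hx4]; exact htL
  have hTeq : (∑ j ∈ Finset.range (dg ℓ₁ ℓ₂ (k + 3) + 1),
      Qc K ℓ₁ ℓ₂ (k + 3) j * (x (k + 3)) ^ j) = x (k + 2) * x (k + 4) := by
    rw [hteq, hx4]
  -- invariants
  have hq3 : qf ℓ₁ ℓ₂ e₃ = rr ℓ₁ ℓ₂ (k + 3) := P23.2.1
  have hσ3 : e₃.1 + e₃.2 ≠ 0 := sigma_ne_zero hℓ₁ hℓ₂ hq3 (rr_cases (k + 3))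
  unfold Window
  rw [i1, i2, i3]
  rcases lt_or_gt_of_ne hσ3 with hneg | hpos
  · -- negative case
    have hT : Rep K ℓ₁ ℓ₂ (∑ j ∈ Finset.range (dg ℓ₁ ℓ₂ (k + 3) + 1),
        Qc K ℓ₁ ℓ₂ (k + 3) j * (x (k + 3)) ^ j)
        ((dg ℓ₁ ℓ₂ (k + 3) : ℤ) * e₃.1, (dg ℓ₁ ℓ₂ (k + 3) : ℤ) * e₃.2) :=
      rep_eval_neg hℓ₁ hℓ₂ R3 hneg (dg_pos hℓ₁ hℓ₂ (k + 3))
        (fun j hj => Qc_mem (k + 3) hj) (Qc_top hℓ₁ hℓ₂ (k + 3))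
    have hR4 := rep_cancel hℓ₁ hℓ₂ hT R2 hx4L hTeq
    have hpair : (((dg ℓ₁ ℓ₂ (k + 3) : ℤ) * e₃.1, (dg ℓ₁ ℓ₂ (k + 3) : ℤ) * e₃.2) : ℤ × ℤ) - e₂
        = ((dg ℓ₁ ℓ₂ (k + 3) : ℤ) * e₃.1 - e₂.1, (dg ℓ₁ ℓ₂ (k + 3) : ℤ) * e₃.2 - e₂.2) := rfl
    rw [hpair] at hR4
    have hP34 := phi_step1 (ℓ := (dg ℓ₁ ℓ₂ (k + 3) : ℤ)) P23 hneg (dg_rr (k + 3))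
    rw [← hrr42] at hP34
    exact ⟨e₁, e₂, e₃, _, R1, R2, R3, hR4, P12, P23, hP34⟩
  · -- positive case
    have hT : Rep K ℓ₁ ℓ₂ (∑ j ∈ Finset.range (dg ℓ₁ ℓ₂ (k + 3) + 1),
        Qc K ℓ₁ ℓ₂ (k + 3) j * (x (k + 3)) ^ j) (0, 0) :=
      rep_eval_pos hℓ₁ hℓ₂ R3 hpos (fun j hj => Qc_mem (k + 3) hj)
        (Qc_zero hℓ₁ hℓ₂ (k + 3))
    have hR4 := rep_cancel hℓ₁ hℓ₂ hT R2 hx4L hTeq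
    have hpair : (((0 : ℤ), (0 : ℤ)) : ℤ × ℤ) - e₂ = (-e₂.1, -e₂.2) := by
      apply Prod.ext <;> simp
    rw [hpair] at hR4
    have hP34 := phi_step2 hℓ₁ hℓ₂ P23 hpos (rr_cases (k + 2))
    rw [← hrr42] at hP34
    exact ⟨e₁, e₂, e₃, _, R1, R2, R3, hR4, P12, P23, hP34⟩

include hℓ₁ hℓ₂ in
lemma window_bwd {x : ℤ → FF K} (hx : IsPreVarSeq K ℓ₁ ℓ₂ x) {k : ℤ}
    (hW : Window K ℓ₁ ℓ₂ x k) : Window K ℓ₁ ℓ₂ x (k - 1) := by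
  obtain ⟨e₀, e₁, e₂, e₃, R0, R1, R2, R3, P01, P12, P23⟩ := hW
  have nz0 := Rep.ne_zero hℓ₁ hℓ₂ R0
  have nz1 := Rep.ne_zero hℓ₁ hℓ₂ R1
  have nz2 := Rep.ne_zero hℓ₁ hℓ₂ R2
  have nz3 := Rep.ne_zero hℓ₁ hℓ₂ R3
  have i1 : k + 1 + 1 = k + 2 := by ring
  have i4 : k + 2 + 1 = k + 3 := by ring
  have i5 : k + 2 - 1 = k + 1 := by ring
  have hdg02 : dg ℓ₁ ℓ₂ (k + 2) = dg ℓ₁ ℓ₂ k := dg_per k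
  have hrr13 : rr ℓ₁ ℓ₂ (k + 1) = rr ℓ₁ ℓ₂ (k - 1) := by
    have := rr_per (ℓ₁ := ℓ₁) (ℓ₂ := ℓ₂) (k - 1)
    rwa [show k - 1 + 2 = k + 1 from by ring] at this
  -- relations
  have hrel0 : x (k + 1) * x (k - 1)
      = ∑ j ∈ Finset.range (dg ℓ₁ ℓ₂ k + 1), Qc K ℓ₁ ℓ₂ k j * (x k) ^ j :=
    rel hx k nz0
  have hrel1 : x k * x (k + 2)
      = ∑ j ∈ Finset.range (dg ℓ₁ ℓ₂ (k + 1) + 1), Qc K ℓ₁ ℓ₂ (k + 1) j * (x (k + 1)) ^ j := by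
    have := rel hx (k + 1) nz1
    rw [i1, show k + 1 - 1 = k from by ring] at this
    rw [← this]
    ring
  have hrel2 : x (k + 1) * x (k + 3)
      = ∑ j ∈ Finset.range (dg ℓ₁ ℓ₂ (k + 2) + 1), Qc K ℓ₁ ℓ₂ (k + 2) j * (x (k + 2)) ^ j := by
    have := rel hx (k + 2) nz2
    rw [i4, i5] at this
    rw [← this]
    ring
  have hrev : ∀ j, j ≤ dg ℓ₁ ℓ₂ (k + 2) →
      Qc K ℓ₁ ℓ₂ k j = cQ K ℓ₁ ℓ₂ (k + 2) * Qc K ℓ₁ ℓ₂ (k + 2) (dg ℓ₁ ℓ₂ (k + 2) - j) := by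
    intro j hj
    have h1 := Qc_rev (K := K) (k + 2) hj
    rw [show k + 2 + 2 = k + 4 from by ring] at h1
    rwa [Qc_per] at h1
  -- divisibility
  obtain ⟨t, htL, hteq⟩ := div_step R1.mem_laurent R0.mem_laurent R2.mem_laurent
    R3.mem_laurent (cQ_mem_laurent hℓ₁ hℓ₂ (k + 2))
    (fun j hj => Qc_mem (k + 1) hj) (Qc_zero hℓ₁ hℓ₂ (k + 1))
    (fun i hi => Qc_mem (k + 2) hi)
    (fun j hj => Qc_mem k (by rwa [hdg02] at hj))
    hrel1 hrel2 hrev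
  rw [hdg02] at hteq
  -- identify x (k-1)
  have hxm : x (k - 1) = t := by
    apply mul_left_cancel₀ nz1
    rw [hrel0, hteq]
  have hxmL : x (k - 1) ∈ LaurentRing K ℓ₁ ℓ₂ := by rw [hxm]; exact htL
  have hTeq : (∑ j ∈ Finset.range (dg ℓ₁ ℓ₂ k + 1),
      Qc K ℓ₁ ℓ₂ k j * (x k) ^ j) = x (k + 1) * x (k - 1) := by
    rw [hteq, hxm]
  -- invariants
  have hq0 : qf ℓ₁ ℓ₂ e₀ = rr ℓ₁ ℓ₂ k := P01.1
  have hσ0 : e₀.1 + e₀.2 ≠ 0 := sigma_ne_zero hℓ₁ hℓ₂ hq0 (rr_cases k)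
  have P10 := phi_swap P01
  unfold Window
  rw [show k - 1 + 1 = k from by ring, show k - 1 + 2 = k + 1 from by ring,
    show k - 1 + 3 = k + 2 from by ring]
  rcases lt_or_gt_of_ne hσ0 with hneg | hpos
  · have hT : Rep K ℓ₁ ℓ₂ (∑ j ∈ Finset.range (dg ℓ₁ ℓ₂ k + 1),
        Qc K ℓ₁ ℓ₂ k j * (x k) ^ j)
        ((dg ℓ₁ ℓ₂ k : ℤ) * e₀.1, (dg ℓ₁ ℓ₂ k : ℤ) * e₀.2) :=
      rep_eval_neg hℓ₁ hℓ₂ R0 hneg (dg_pos hℓ₁ hℓ₂ k)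
        (fun j hj => Qc_mem k hj) (Qc_top hℓ₁ hℓ₂ k)
    have hRm := rep_cancel hℓ₁ hℓ₂ hT R1 hxmL hTeq
    have hpair : (((dg ℓ₁ ℓ₂ k : ℤ) * e₀.1, (dg ℓ₁ ℓ₂ k : ℤ) * e₀.2) : ℤ × ℤ) - e₁
        = ((dg ℓ₁ ℓ₂ k : ℤ) * e₀.1 - e₁.1, (dg ℓ₁ ℓ₂ k : ℤ) * e₀.2 - e₁.2) := rfl
    rw [hpair] at hRm
    have hPm := phi_step1 (ℓ := (dg ℓ₁ ℓ₂ k : ℤ)) P10 hneg (dg_rr k)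
    have hPm' := phi_swap hPm
    rw [hrr13] at hPm'
    exact ⟨_, e₀, e₁, e₂, hRm, R0, R1, R2, hPm', P01, P12⟩
  · have hT : Rep K ℓ₁ ℓ₂ (∑ j ∈ Finset.range (dg ℓ₁ ℓ₂ k + 1),
        Qc K ℓ₁ ℓ₂ k j * (x k) ^ j) (0, 0) :=
      rep_eval_pos hℓ₁ hℓ₂ R0 hpos (fun j hj => Qc_mem k hj) (Qc_zero hℓ₁ hℓ₂ k)
    have hRm := rep_cancel hℓ₁ hℓ₂ hT R1 hxmL hTeq
    have hpair : (((0 : ℤ), (0 : ℤ)) : ℤ × ℤ) - e₁ = (-e₁.1, -e₁.2) := by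
      apply Prod.ext <;> simp
    rw [hpair] at hRm
    have hPm := phi_step2 hℓ₁ hℓ₂ P10 hpos (rr_cases (k + 1))
    have hPm' := phi_swap hPm
    rw [hrr13] at hPm'
    exact ⟨_, e₀, e₁, e₂, hRm, R0, R1, R2, hPm', P01, P12⟩

include hℓ₁ hℓ₂ in
lemma window_one {x : ℤ → FF K} (hx : IsPreVarSeq K ℓ₁ ℓ₂ x) : Window K ℓ₁ ℓ₂ x 1 := by
  -- representations of x1 and x2
  have hx1 : Rep K ℓ₁ ℓ₂ (x 1) (1, 0) := by
    rw [hx.1]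
    have := rep_monomial (K := K) hℓ₁ hℓ₂ 0 0 ((1 : ℤ), (0 : ℤ))
    simpa [mon] using this
  have hx2 : Rep K ℓ₁ ℓ₂ (x 2) (0, 1) := by
    rw [hx.2.1]
    have := rep_monomial (K := K) hℓ₁ hℓ₂ 0 0 ((0 : ℤ), (1 : ℤ))
    simpa [mon] using this
  have nz1 := Rep.ne_zero hℓ₁ hℓ₂ hx1
  have nz2 := Rep.ne_zero hℓ₁ hℓ₂ hx2
  -- x 3
  have hrel2 : x 3 * x 1
      = ∑ j ∈ Finset.range (dg ℓ₁ ℓ₂ 2 + 1), Qc K ℓ₁ ℓ₂ 2 j * (x 2) ^ j := by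
    have := rel hx 2 nz2
    norm_num at this
    exact this
  have hT2 : Rep K ℓ₁ ℓ₂ (∑ j ∈ Finset.range (dg ℓ₁ ℓ₂ 2 + 1), Qc K ℓ₁ ℓ₂ 2 j * (x 2) ^ j)
      (0, 0) :=
    rep_eval_pos hℓ₁ hℓ₂ hx2 (by norm_num) (fun j hj => Qc_mem 2 hj) (Qc_zero hℓ₁ hℓ₂ 2)
  have hx3L : x 3 ∈ LaurentRing K ℓ₁ ℓ₂ := by
    have h3 : x 3 = (∑ j ∈ Finset.range (dg ℓ₁ ℓ₂ 2 + 1), Qc K ℓ₁ ℓ₂ 2 j * (x 2) ^ j)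
        * (x 1)⁻¹ := by
      rw [← hrel2, mul_assoc, mul_inv_cancel₀ nz1, mul_one]
    rw [h3, hx.1]
    exact mul_mem hT2.mem_laurent x1_inv_mem_laurent
  have hx3 : Rep K ℓ₁ ℓ₂ (x 3) (-1, 0) := by
    have heq : (∑ j ∈ Finset.range (dg ℓ₁ ℓ₂ 2 + 1), Qc K ℓ₁ ℓ₂ 2 j * (x 2) ^ j)
        = x 1 * x 3 := by rw [← hrel2]; ring
    have := rep_cancel hℓ₁ hℓ₂ hT2 hx1 hx3L heq
    have hpair : (((0 : ℤ), (0 : ℤ)) : ℤ × ℤ) - (1, 0) = ((-1 : ℤ), (0 : ℤ)) := by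
      apply Prod.ext <;> simp
    rwa [hpair] at this
  have nz3 := Rep.ne_zero hℓ₁ hℓ₂ hx3
  -- x 4
  have hrel3 : x 4 * x 2
      = ∑ j ∈ Finset.range (dg ℓ₁ ℓ₂ 3 + 1), Qc K ℓ₁ ℓ₂ 3 j * (x 3) ^ j := by
    have := rel hx 3 nz3
    norm_num at this
    exact this
  have hT3 : Rep K ℓ₁ ℓ₂ (∑ j ∈ Finset.range (dg ℓ₁ ℓ₂ 3 + 1), Qc K ℓ₁ ℓ₂ 3 j * (x 3) ^ j)
      ((dg ℓ₁ ℓ₂ 3 : ℤ) * (-1 : ℤ), (dg ℓ₁ ℓ₂ 3 : ℤ) * (0 : ℤ)) := by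
    have := rep_eval_neg hℓ₁ hℓ₂ hx3 (by norm_num) (dg_pos hℓ₁ hℓ₂ 3)
      (fun j hj => Qc_mem 3 hj) (Qc_top hℓ₁ hℓ₂ 3)
    exact this
  have hx4L : x 4 ∈ LaurentRing K ℓ₁ ℓ₂ := by
    have h4 : x 4 = (∑ j ∈ Finset.range (dg ℓ₁ ℓ₂ 3 + 1), Qc K ℓ₁ ℓ₂ 3 j * (x 3) ^ j)
        * (x 2)⁻¹ := by
      rw [← hrel3, mul_assoc, mul_inv_cancel₀ nz2, mul_one]
    rw [h4, hx.2.1]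
    exact mul_mem hT3.mem_laurent x2_inv_mem_laurent
  have hdg3 : dg ℓ₁ ℓ₂ 3 = ℓ₁ := by
    unfold dg
    norm_num
  have hx4 : Rep K ℓ₁ ℓ₂ (x 4) (-(ℓ₁ : ℤ), -1) := by
    have heq : (∑ j ∈ Finset.range (dg ℓ₁ ℓ₂ 3 + 1), Qc K ℓ₁ ℓ₂ 3 j * (x 3) ^ j)
        = x 2 * x 4 := by rw [← hrel3]; ring
    have := rep_cancel hℓ₁ hℓ₂ hT3 hx2 hx4L heq
    have hpair : (((dg ℓ₁ ℓ₂ 3 : ℤ) * (-1 : ℤ), (dg ℓ₁ ℓ₂ 3 : ℤ) * (0 : ℤ)) : ℤ × ℤ)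
        - (0, 1) = (-(ℓ₁ : ℤ), (-1 : ℤ)) := by
      rw [hdg3]
      apply Prod.ext <;> simp
    rwa [hpair] at this
  -- the invariants
  have hrr1 : rr ℓ₁ ℓ₂ 1 = (ℓ₂ : ℤ) := by unfold rr; norm_num
  have hrr2 : rr ℓ₁ ℓ₂ 2 = (ℓ₁ : ℤ) := by unfold rr; norm_num
  have hrr3 : rr ℓ₁ ℓ₂ 3 = (ℓ₂ : ℤ) := by unfold rr; norm_num
  have hrr4 : rr ℓ₁ ℓ₂ 4 = (ℓ₁ : ℤ) := by unfold rr; norm_num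
  have P01 : Phi ℓ₁ ℓ₂ (rr ℓ₁ ℓ₂ 1) (rr ℓ₁ ℓ₂ 2) (1, 0) (0, 1) := by
    rw [hrr1, hrr2]
    refine ⟨by unfold qf; ring, by unfold qf; ring, Or.inr ⟨by unfold bf; ring, by norm_num, by norm_num⟩⟩
  have P12 : Phi ℓ₁ ℓ₂ (rr ℓ₁ ℓ₂ 2) (rr ℓ₁ ℓ₂ 3) (0, 1) (-1, 0) := by
    rw [hrr2, hrr3]
    refine ⟨by unfold qf; ring, by unfold qf; ring, Or.inl ⟨by unfold bf; ring, ?_⟩⟩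
    rintro ⟨-, h⟩
    norm_num at h
  have P23 : Phi ℓ₁ ℓ₂ (rr ℓ₁ ℓ₂ 3) (rr ℓ₁ ℓ₂ 4) (-1, 0) (-(ℓ₁ : ℤ), -1) := by
    rw [hrr3, hrr4]
    refine ⟨by unfold qf; ring, by unfold qf; ring, Or.inl ⟨by unfold bf; ring, ?_⟩⟩
    rintro ⟨h, -⟩
    norm_num at h
  refine ⟨(1, 0), (0, 1), (-1, 0), (-(ℓ₁ : ℤ), -1), hx1, ?_, ?_, ?_, P01, P12, P23⟩
  · norm_num
    exact hx2
  · norm_num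
    exact hx3
  · norm_num
    exact hx4

include hℓ₁ hℓ₂ in
lemma window_all {x : ℤ → FF K} (hx : IsPreVarSeq K ℓ₁ ℓ₂ x) (k : ℤ) :
    Window K ℓ₁ ℓ₂ x k := by
  have base := window_one hℓ₁ hℓ₂ hx
  have hup : ∀ n : ℕ, Window K ℓ₁ ℓ₂ x (1 + n) := by
    intro n
    induction n with
    | zero => simpa using base
    | succ m ih =>
      have := window_fwd hℓ₁ hℓ₂ hx ih
      rwa [show (1 : ℤ) + (m : ℕ) + 1 = 1 + ((m + 1 : ℕ) : ℤ) from by push_cast; ring] at this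
  have hdn : ∀ n : ℕ, Window K ℓ₁ ℓ₂ x (1 - n) := by
    intro n
    induction n with
    | zero => simpa using base
    | succ m ih =>
      have := window_bwd hℓ₁ hℓ₂ hx ih
      rwa [show (1 : ℤ) - (m : ℕ) - 1 = 1 - ((m + 1 : ℕ) : ℤ) from by push_cast; ring] at this
  rcases le_or_gt 1 k with h | h
  · have : k = 1 + ((k - 1).toNat : ℤ) := by omega
    rw [this]
    exact hup _
  · have : k = 1 - ((1 - k).toNat : ℤ) := by omega
    rw [this]
    exact hdn _

end Main

theorem preVar_main (K : Type) [Field K]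
    (ℓ₁ ℓ₂ : ℕ) (hℓ₁ : 1 ≤ ℓ₁) (hℓ₂ : 1 ≤ ℓ₂)
    (x : ℤ → FF K) (hx : IsPreVarSeq K ℓ₁ ℓ₂ x) :
    ∀ k : ℤ, ∃ (D : Finset (ℤ × ℤ)) (c : ℤ × ℤ → FF K) (d₀ : ℤ × ℤ) (a b : ℤ),
      (∀ d ∈ D, c d ≠ 0 ∧ c d ∈ CoeffRing K ℓ₁ ℓ₂) ∧
      x k = ∑ d ∈ D, c d * x1 K ^ d.1 * x2 K ^ d.2 ∧
      d₀ ∈ D ∧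
      (∀ d ∈ D, d ≠ d₀ → d₀.1 + d₀.2 < d.1 + d.2) ∧
      p K 0 ℓ₁ ^ a * p K 1 ℓ₂ ^ b * c d₀ = 1 := by
  intro k
  obtain ⟨e₀, e₁, e₂, e₃, R0, -, -, -, -, -, -⟩ := window_all hℓ₁ hℓ₂ hx k
  obtain ⟨D, c, ⟨hmem, hsum⟩, hnz, heD, hmin, α, β, hcoef⟩ := R0
  refine ⟨D, c, e₀, -α, -β, fun d hd => ⟨hnz d hd, hmem d hd⟩, ?_, heD, hmin, ?_⟩
  · rw [hsum]
    apply Finset.sum_congr rfl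
    intro d _
    rw [mon, ← mul_assoc]
  · rw [hcoef]
    have h1 : p K 0 ℓ₁ ^ (-α) * p K 1 ℓ₂ ^ (-β) * (p K 0 ℓ₁ ^ α * p K 1 ℓ₂ ^ β)
        = (p K 0 ℓ₁ ^ (-α) * p K 0 ℓ₁ ^ α) * (p K 1 ℓ₂ ^ (-β) * p K 1 ℓ₂ ^ β) := by
      ring
    rw [h1, ← zpow_add₀ (p_ne_zero K 0 ℓ₁), ← zpow_add₀ (p_ne_zero K 1 ℓ₂)]
    norm_num


end GCA

namespace GCA

/-- for each `k ∈ ℤ`, the cluster pre-variable `x_k`, regarded as a Laurent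
polynomial in `x₁, x₂` over `k[p_{1,1},…,p_{1,ℓ₁},p_{1,ℓ₁}^{-1},p_{2,1},…,p_{2,ℓ₂},p_{2,ℓ₂}^{-1}]`,
has a unique term of minimal total degree, and there exist integers `a_k, b_k` such that
`X_k = p_{1,ℓ₁}^{a_k}·p_{2,ℓ₂}^{b_k}·x_k` has this unique minimal total-degree term with
coefficient `1`.  (This makes the generalized cluster variables `X_k` well defined.) -/
theorem preVar_has_unique_min_term_and_normalization (K : Type) [Field K] [CharZero K]
    (ℓ₁ ℓ₂ : ℕ) (hℓ₁ : 1 ≤ ℓ₁) (hℓ₂ : 1 ≤ ℓ₂)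
    (x : ℤ → FF K) (hx : IsPreVarSeq K ℓ₁ ℓ₂ x) :
    ∀ k : ℤ, ∃ (D : Finset (ℤ × ℤ)) (c : ℤ × ℤ → FF K) (d₀ : ℤ × ℤ) (a b : ℤ),
      (∀ d ∈ D, c d ≠ 0 ∧ c d ∈ CoeffRing K ℓ₁ ℓ₂) ∧
      x k = ∑ d ∈ D, c d * x1 K ^ d.1 * x2 K ^ d.2 ∧
      d₀ ∈ D ∧
      (∀ d ∈ D, d ≠ d₀ → d₀.1 + d₀.2 < d.1 + d.2) ∧
      p K 0 ℓ₁ ^ a * p K 1 ℓ₂ ^ b * c d₀ = 1 := by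
  exact preVar_main K ℓ₁ ℓ₂ hℓ₁ hℓ₂ x hx

end GCA
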